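/- arXiv:1512.03838 — 5 statements merged into one kernel-verified Lean document; each statement's English description precedes it below -/
import Mathlib

section
/- The quadratic optimization problem minimizing (1/2)·Σ_i f_i u_i² over (u,V) subject to L V = I + u (with L a connected-graph Laplacian and f_i > 0) has optimal controlled injection u* = μ F^{-1} 1_n, where F = diag(f_1,...,f_n) and μ = -(Σ_i I_i)/(Σ_i f_i^{-1}). -/
open Matrix Finset

noncomputable def sumLM (n : ℕ) : (Fin n → ℝ) →ₗ[ℝ] ℝ where
  toFun v := ∑ i, v i
  map_add' x y := by simp [Finset.sum_add_distrib]
  map_smul' c x := by simp [Finset.mul_sum]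

lemma colsum_zero {n : ℕ} (L : Matrix (Fin n) (Fin n) ℝ)
    (hH : L.IsHermitian)
    (hker : ∀ v : Fin n → ℝ, L *ᵥ v = 0 ↔ ∃ c : ℝ, v = fun _ => c)
    (v : Fin n → ℝ) : ∑ i, (L *ᵥ v) i = 0 := by
  have h1 : L *ᵥ (fun _ => (1:ℝ)) = 0 := (hker _).mpr ⟨1, rfl⟩
  have hrow : ∀ j : Fin n, ∑ i, L j i = 0 := by
    intro j
    have := congrFun h1 j
    simpa [Matrix.mulVec, dotProduct] using this
  calc ∑ i, (L *ᵥ v) i = ∑ i, ∑ j, L i j * v j := by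
        simp [Matrix.mulVec, dotProduct]
    _ = ∑ j, ∑ i, L i j * v j := Finset.sum_comm
    _ = ∑ j, (∑ i, L j i) * v j := by
        apply Finset.sum_congr rfl; intro j _
        rw [Finset.sum_mul]
        apply Finset.sum_congr rfl; intro i _
        have : L i j = L j i := by
          have := congrFun (congrFun hH i) j
          simpa [Matrix.conjTranspose_apply] using this.symm
        rw [this]
    _ = 0 := by simp [hrow]

lemma exists_solution {n : ℕ} (hn : 0 < n) (L : Matrix (Fin n) (Fin n) ℝ)
    (hH : L.IsHermitian)
    (hker : ∀ v : Fin n → ℝ, L *ᵥ v = 0 ↔ ∃ c : ℝ, v = fun _ => c)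
    (w : Fin n → ℝ) (hw : ∑ i, w i = 0) : ∃ V : Fin n → ℝ, L *ᵥ V = w := by
  set T := LinearMap.ker (sumLM n) with hT
  have hwT : w ∈ T := by simpa [sumLM, hT] using hw
  -- kernel of L is span of ones
  have hkernel : LinearMap.ker (Matrix.toLin' L) = Submodule.span ℝ {(fun _ => (1:ℝ) : Fin n → ℝ)} := by
    ext v
    simp only [LinearMap.mem_ker, Matrix.toLin'_apply, hker, Submodule.mem_span_singleton]
    constructor
    · rintro ⟨c, rfl⟩; exact ⟨c, by funext i; simp⟩
    · rintro ⟨a, rfl⟩; exact ⟨a, by funext i; simp⟩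
  have hone : (fun _ => (1:ℝ) : Fin n → ℝ) ≠ 0 := by
    intro h
    have := congrFun h ⟨0, hn⟩
    simp at this
  have hker1 : Module.finrank ℝ (LinearMap.ker (Matrix.toLin' L)) = 1 := by
    rw [hkernel, finrank_span_singleton hone]
  have hrange : Module.finrank ℝ (LinearMap.range (Matrix.toLin' L)) = n - 1 := by
    have := LinearMap.finrank_range_add_finrank_ker (Matrix.toLin' L)
    rw [hker1] at this
    simp only [Module.finrank_pi, Module.finrank_self, Finset.card_univ, Fintype.card_fin] at this
    omega
  have hsurj : Function.Surjective (sumLM n) := by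
    intro r
    refine ⟨fun _ => r / n, ?_⟩
    have hn' : (n : ℝ) ≠ 0 := Nat.cast_ne_zero.mpr hn.ne'
    simp [sumLM]
    field_simp
  have hTrank : Module.finrank ℝ T = n - 1 := by
    have := LinearMap.finrank_range_add_finrank_ker (sumLM n)
    rw [LinearMap.range_eq_top.mpr hsurj] at this
    rw [finrank_top, Module.finrank_self] at this
    simp only [Module.finrank_pi, Finset.card_univ, Fintype.card_fin] at this
    rw [hT]
    omega
  have hle : LinearMap.range (Matrix.toLin' L) ≤ T := by
    rintro x ⟨v, rfl⟩
    simp only [hT, LinearMap.mem_ker, Matrix.toLin'_apply]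
    simpa [sumLM] using colsum_zero L hH hker v
  have heq : LinearMap.range (Matrix.toLin' L) = T :=
    Submodule.eq_of_le_of_finrank_le hle (by rw [hrange, hTrank])
  have : w ∈ LinearMap.range (Matrix.toLin' L) := heq ▸ hwT
  obtain ⟨V, hV⟩ := this
  exact ⟨V, by simpa [Matrix.toLin'_apply] using hV⟩

/-- The quadratic program `min (1/2)∑ f i * u i ^ 2` subject to `L V = I + u` has
optimal controlled injection `u* = μ F⁻¹ 1ₙ` with `μ = -(∑ I i)/(∑ (f i)⁻¹)`. -/
theorem stmt2 (n : ℕ) (hn : 0 < n) (L : Matrix (Fin n) (Fin n) ℝ)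
    (hLpsd : L.PosSemidef)
    (hker : ∀ v : Fin n → ℝ, L *ᵥ v = 0 ↔ ∃ c : ℝ, v = fun _ => c)
    (I : Fin n → ℝ) (f : Fin n → ℝ) (hf : ∀ i, 0 < f i) :
    letI μ : ℝ := -(∑ i, I i) / (∑ i, (f i)⁻¹)
    letI ustar : Fin n → ℝ := fun i => μ * (f i)⁻¹
    (∃ V : Fin n → ℝ, L *ᵥ V = I + ustar) ∧
      ∀ u : Fin n → ℝ, (∃ V : Fin n → ℝ, L *ᵥ V = I + u) →
        ∑ i, (1 / 2) * f i * ustar i ^ 2 ≤ ∑ i, (1 / 2) * f i * u i ^ 2 := by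
  set μ : ℝ := -(∑ i, I i) / (∑ i, (f i)⁻¹) with hμ
  set ustar : Fin n → ℝ := fun i => μ * (f i)⁻¹ with hustar
  have hfinv_pos : 0 < ∑ i, (f i)⁻¹ :=
    Finset.sum_pos (fun i _ => inv_pos.mpr (hf i)) ⟨⟨0, hn⟩, mem_univ _⟩
  have hfinv_ne : (∑ i, (f i)⁻¹) ≠ 0 := hfinv_pos.ne'
  have hsum_ustar : ∑ i, ustar i = -(∑ i, I i) := by
    simp only [hustar, ← Finset.mul_sum, hμ]
    rw [div_mul_cancel₀ _ hfinv_ne]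
  constructor
  · apply exists_solution hn L hLpsd.1 hker
    simp [Finset.sum_add_distrib, hsum_ustar]
  · rintro u ⟨V, hV⟩
    have hsum_u : ∑ i, u i = -(∑ i, I i) := by
      have h0 : ∑ i, (L *ᵥ V) i = 0 := colsum_zero L hLpsd.1 hker V
      rw [hV] at h0
      simp only [Pi.add_apply, Finset.sum_add_distrib] at h0
      linarith
    have key : ∀ i : Fin n, (1/2) * f i * u i ^ 2 =
        (1/2) * f i * ustar i ^ 2 + (1/2) * f i * (u i - ustar i)^2 + μ * (u i - ustar i) := by
      intro i
      have hfi : f i ≠ 0 := (hf i).ne'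
      have : f i * ustar i = μ := by
        simp only [hustar]; field_simp
      rw [← this]; ring
    calc ∑ i, (1/2) * f i * ustar i ^ 2
        ≤ ∑ i, ((1/2) * f i * ustar i ^ 2 + (1/2) * f i * (u i - ustar i)^2 + μ * (u i - ustar i)) := by
          rw [Finset.sum_add_distrib, Finset.sum_add_distrib, ← Finset.mul_sum]
          have h1 : 0 ≤ ∑ i, (1/2) * f i * (u i - ustar i)^2 :=
            Finset.sum_nonneg fun i _ => mul_nonneg (mul_nonneg (by norm_num) (hf i).le) (sq_nonneg _)
          have h2 : ∑ i, (u i - ustar i) = 0 := by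
            simp [Finset.sum_sub_distrib, hsum_u, hsum_ustar]
          rw [h2]; linarith
      _ = ∑ i, (1/2) * f i * u i ^ 2 := by
          exact Finset.sum_congr rfl fun i _ => (key i).symm
end

section
/- Let L_γ = (1/γ)L + K^P where L is a connected-graph Laplacian and K^P a positive definite diagonal matrix. As γ → 0+, the equilibrium V'(γ) = L_γ^{-1} I^inj converges to (a/λ) 1_n for scalars a, λ; specifically lim_{γ→0} V'(γ) = ((Σ_i I_i^inj)/(Σ_i K^P_i)) 1_n. -/
open Matrix Finset Filter


noncomputable def qaux {n : ℕ} (L D : Matrix (Fin n) (Fin n) ℝ) (γ : ℝ) : ℝ :=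
  (∑ i, (L.updateRow i (D i)).det) +
    ∑ s ∈ Finset.univ.filter (fun s : Finset (Fin n) => 2 ≤ s.card),
      γ ^ (s.card - 1) *
        Matrix.detRowAlternating (s.piecewise (fun i => D i) (fun i => L i))

lemma det_add_smul_eq {n : ℕ} (L D : Matrix (Fin n) (Fin n) ℝ) (hL : L.det = 0) (γ : ℝ) :
    (L + γ • D).det = γ * qaux L D γ := by
  classical
  set f := (Matrix.detRowAlternating (R := ℝ) (n := Fin n)).toMultilinearMap with hf
  have key := f.map_add_eq_map_add_linearDeriv_add (fun i => L i) (fun i => γ • D i)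
  have harg : ((fun i => L i) + fun i => γ • D i) = fun i => (L + γ • D) i := by
    funext i j
    simp [Matrix.add_apply, Matrix.smul_apply]
  rw [harg] at key
  have h0 : (L + γ • D).det = f (fun i => (L + γ • D) i) := rfl
  have h1 : f (fun i => L i) = L.det := rfl
  -- linear derivative term
  have h2 : f.linearDeriv (fun i => L i) (fun i => γ • D i)
      = γ * ∑ i, (L.updateRow i (D i)).det := by
    have hsm : (fun i => γ • D i) = γ • (fun i => D i) := rfl
    rw [hsm, LinearMap.map_smul, MultilinearMap.linearDeriv_apply]
    simp only [smul_eq_mul]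
    congr 1
  -- higher order terms
  have h3 : ∀ s ∈ Finset.univ.filter (fun s : Finset (Fin n) => 2 ≤ s.card),
      f (s.piecewise (fun i => γ • D i) (fun i => L i))
        = γ * (γ ^ (s.card - 1) *
            Matrix.detRowAlternating (s.piecewise (fun i => D i) (fun i => L i))) := by
    intro s hs
    have hs2 : 2 ≤ s.card := (Finset.mem_filter.mp hs).2
    set m := s.piecewise (fun i => D i) (fun i => L i) with hm
    have hpw : s.piecewise (fun i => γ • D i) (fun i => L i)
        = s.piecewise (fun i => γ • m i) m := by
      funext i
      by_cases hi : i ∈ s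
      · simp [hm, Finset.piecewise_eq_of_mem _ _ _ hi]
      · simp [hm, Finset.piecewise_eq_of_notMem _ _ _ hi]
    rw [hpw, f.map_piecewise_smul (fun _ => γ) m s]
    rw [Finset.prod_const, smul_eq_mul]
    have : γ ^ s.card = γ * γ ^ (s.card - 1) := by
      conv_lhs => rw [← Nat.succ_pred_eq_of_pos (by omega : 0 < s.card)]
      rw [pow_succ']
      rfl
    rw [this, mul_assoc]
    rfl
  rw [h0, key, h1, hL, h2, Finset.sum_congr rfl h3, ← Finset.mul_sum, qaux]
  ring

lemma qaux_continuous {n : ℕ} (L D : Matrix (Fin n) (Fin n) ℝ) : Continuous (qaux L D) := by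
  unfold qaux
  exact continuous_const.add (continuous_finset_sum _ fun s _ =>
    (continuous_pow _).mul continuous_const)

lemma qaux_zero {n : ℕ} (L D : Matrix (Fin n) (Fin n) ℝ) :
    qaux L D 0 = ∑ i, (L.updateRow i (D i)).det := by
  unfold qaux
  have h : ∑ s ∈ Finset.univ.filter (fun s : Finset (Fin n) => 2 ≤ s.card),
      (0:ℝ) ^ (s.card - 1) *
        Matrix.detRowAlternating (s.piecewise (fun i => D i) (fun i => L i)) = 0 := by
    refine Finset.sum_eq_zero fun s hs => ?_
    have hs2 : 2 ≤ s.card := (Finset.mem_filter.mp hs).2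
    rw [zero_pow (by omega), zero_mul]
  rw [h, add_zero]


lemma updateRow_single_det_pos {n : ℕ} (L : Matrix (Fin n) (Fin n) ℝ)
    (hLpsd : L.PosSemidef)
    (hker : ∀ v : Fin n → ℝ, L *ᵥ v = 0 ↔ ∃ c : ℝ, v = fun _ => c)
    (hdetL : L.det = 0) (i : Fin n) :
    0 < (L.updateRow i (Pi.single i 1)).det := by
  classical
  set E : Matrix (Fin n) (Fin n) ℝ := Matrix.of fun j k => if j = i ∧ k = i then (1:ℝ) else 0
    with hE
  have hEx : ∀ x : Fin n → ℝ, E *ᵥ x = fun j => if j = i then x i else 0 := by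
    intro x
    funext j
    by_cases hj : j = i <;>
      simp [hE, Matrix.mulVec, dotProduct, hj, ite_and]
  have hpd : (L + E).PosDef := by
    refine Matrix.PosDef.of_dotProduct_mulVec_pos ?_ ?_
    · refine hLpsd.1.add ?_
      ext j k
      simp only [hE, Matrix.conjTranspose_apply, Matrix.of_apply, star_trivial]
      by_cases h : j = i <;> by_cases h' : k = i <;> simp [h, h']
    · intro x hx
      rw [Matrix.add_mulVec, dotProduct_add, hEx]
      have hxE : (star x ⬝ᵥ fun j => if j = i then x i else 0) = x i * x i := by
        simp [dotProduct, star_trivial]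
      rw [hxE]
      have hL0 : 0 ≤ star x ⬝ᵥ L *ᵥ x := hLpsd.dotProduct_mulVec_nonneg x
      rcases lt_or_eq_of_le hL0 with h | h
      · exact add_pos_of_pos_of_nonneg h (mul_self_nonneg _)
      · have hLx : L *ᵥ x = 0 := (hLpsd.dotProduct_mulVec_zero_iff x).mp h.symm
        obtain ⟨c, rfl⟩ := (hker x).mp hLx
        have hc : c ≠ 0 := by
          intro h0
          exact hx (by funext j; simp [h0])
        rw [← h]
        have : 0 < c * c := mul_self_pos.mpr hc
        simpa using this
  have hrw : L + E = L.updateRow i (L i + Pi.single i 1) := by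
    ext j k
    by_cases hj : j = i
    · subst hj
      simp [hE, Matrix.updateRow_apply, Pi.single_apply, eq_comm]
    · simp [hE, Matrix.updateRow_apply, hj]
  have hdet : (L + E).det = (L.updateRow i (Pi.single i 1)).det := by
    rw [hrw, Matrix.det_updateRow_add, Matrix.updateRow_eq_self, hdetL, zero_add]
  rw [← hdet]
  exact hpd.det_pos

/-- As the line resistances go to zero (`γ → 0⁺`, conductances scaled by `1/γ`), the
droop equilibrium `((1/γ)L + Kᴾ)⁻¹ I` converges to `((∑ I i)/(∑ Kᴾ i)) 1ₙ`. -/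
theorem stmt6 (n : ℕ) (hn : 0 < n) (L : Matrix (Fin n) (Fin n) ℝ)
    (hLpsd : L.PosSemidef)
    (hker : ∀ v : Fin n → ℝ, L *ᵥ v = 0 ↔ ∃ c : ℝ, v = fun _ => c)
    (kp : Fin n → ℝ) (hkp : ∀ i, 0 < kp i)
    (Iinj : Fin n → ℝ) :
    Tendsto (fun γ : ℝ => ((1 / γ) • L + Matrix.diagonal kp)⁻¹ *ᵥ Iinj)
      (nhdsWithin 0 (Set.Ioi 0))
      (nhds fun _ : Fin n => (∑ i, Iinj i) / (∑ i, kp i)) := by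
  classical
  have hni : Nonempty (Fin n) := ⟨⟨0, hn⟩⟩
  set D : Matrix (Fin n) (Fin n) ℝ := Matrix.diagonal kp with hD
  have hone : L *ᵥ (fun _ => (1:ℝ)) = 0 := (hker _).mpr ⟨1, rfl⟩
  have hdetL : L.det = 0 := by
    rw [← Matrix.exists_mulVec_eq_zero_iff]
    refine ⟨fun _ => 1, fun h => ?_, hone⟩
    have := congrFun h ⟨0, hn⟩
    simpa using this
  -- column sums of L vanish
  have hsymm : ∀ i j, L i j = L j i := by
    intro i j
    have := congrFun (congrFun hLpsd.1 i) j
    simpa [Matrix.conjTranspose_apply] using this.symm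
  have hcolsum : ∀ j, ∑ i, L i j = 0 := by
    intro j
    have h1 : ∑ i, L j i = 0 := by
      have := congrFun hone j
      simpa [Matrix.mulVec, dotProduct] using this
    rw [← h1]
    exact Finset.sum_congr rfl fun i _ => hsymm i j
  -- facts about q
  set q : ℝ → ℝ := qaux L D with hq
  have hDrow : ∀ i, D i = Pi.single i (kp i) := by
    intro i; funext j
    simp [hD, Matrix.diagonal_apply, Pi.single_apply, eq_comm]
  have hq0 : 0 < q 0 := by
    rw [hq, qaux_zero]
    refine Finset.sum_pos (fun i _ => ?_) Finset.univ_nonempty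
    rw [hDrow i]
    have hs : (Pi.single i (kp i) : Fin n → ℝ) = kp i • (Pi.single i 1 : Fin n → ℝ) := by
      funext j
      simp [Pi.single_apply]
    rw [hs, Matrix.det_updateRow_smul]
    exact mul_pos (hkp i) (updateRow_single_det_pos L hLpsd hker hdetL i)
  have hNpd : ∀ γ : ℝ, 0 < γ → (L + γ • D).PosDef := by
    intro γ hγ
    refine Matrix.PosDef.posSemidef_add hLpsd ?_
    have hds : γ • D = Matrix.diagonal (fun i => γ * kp i) := by
      ext j k
      by_cases h : j = k <;> simp [hD, Matrix.diagonal_apply, h]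
    rw [hds]
    exact Matrix.posDef_diagonal_iff.mpr fun i => mul_pos hγ (hkp i)
  have hdetN : ∀ γ : ℝ, (L + γ • D).det = γ * q γ := det_add_smul_eq L D hdetL
  have hqne : ∀ γ : ℝ, 0 < γ → q γ ≠ 0 := by
    intro γ hγ h0
    have h1 := (hNpd γ hγ).det_pos
    rw [hdetN γ, h0, mul_zero] at h1
    exact lt_irrefl _ h1
  -- the continuous surrogate g
  set g : ℝ → (Fin n → ℝ) := fun γ => (q γ)⁻¹ • ((L + γ • D).adjugate *ᵥ Iinj) with hg
  have heq : ∀ γ ∈ Set.Ioi (0:ℝ), ((1 / γ) • L + D)⁻¹ *ᵥ Iinj = g γ := by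
    intro γ hγ
    have hγ0 : γ ≠ 0 := ne_of_gt hγ
    have hdN : IsUnit (L + γ • D).det := (Ne.isUnit (hNpd γ hγ).det_pos.ne')
    have hM : (1 / γ) • L + D = (1 / γ) • (L + γ • D) := by
      rw [smul_add, smul_smul, one_div, inv_mul_cancel₀ hγ0, one_smul]
    have hinv : ((1 / γ) • L + D)⁻¹ = γ • (L + γ • D)⁻¹ := by
      rw [hM]
      apply Matrix.inv_eq_left_inv
      rw [Matrix.smul_mul, Matrix.mul_smul, smul_smul, mul_one_div, div_self hγ0,
        Matrix.nonsing_inv_mul _ hdN, one_smul]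
    rw [hinv, Matrix.inv_def, Ring.inverse_eq_inv, hdetN γ]
    rw [Matrix.smul_mulVec, Matrix.smul_mulVec, smul_smul]
    rw [hg]
    congr 1
    have hqγ := hqne γ (Set.mem_Ioi.mp hγ)
    field_simp
  -- continuity of g at 0
  have hgcont : Tendsto g (nhds 0) (nhds (g 0)) := by
    have hcq : Continuous q := qaux_continuous L D
    have hmat : Continuous fun γ : ℝ => L + γ • D :=
      continuous_const.add (continuous_id.smul continuous_const)
    have hadj : Continuous fun γ : ℝ => (L + γ • D).adjugate *ᵥ Iinj :=
      (hmat.matrix_adjugate).matrix_mulVec continuous_const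
    exact ((hcq.continuousAt.inv₀ hq0.ne').smul hadj.continuousAt).tendsto
  have htend : Tendsto (fun γ : ℝ => ((1 / γ) • L + D)⁻¹ *ᵥ Iinj)
      (nhdsWithin 0 (Set.Ioi 0)) (nhds (g 0)) := by
    refine Tendsto.congr' ?_ (hgcont.mono_left nhdsWithin_le_nhds)
    filter_upwards [self_mem_nhdsWithin] with γ hγ
    exact (heq γ hγ).symm
  -- identify g 0
  have hker0 : L *ᵥ (L.adjugate *ᵥ Iinj) = 0 := by
    rw [Matrix.mulVec_mulVec, Matrix.mul_adjugate, hdetL, zero_smul, Matrix.zero_mulVec]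
  obtain ⟨c, hc⟩ := (hker _).mp hker0
  have hg0 : g 0 = fun _ => (q 0)⁻¹ * c := by
    rw [hg]
    simp only [zero_smul, add_zero, hc]
    funext j
    simp
  -- the sum identity along the approach
  have hsumid : ∀ γ ∈ Set.Ioi (0:ℝ),
      ∑ i, kp i * ((((1 / γ) • L + D)⁻¹ *ᵥ Iinj) i) = ∑ i, Iinj i := by
    intro γ hγ'
    have hγ : (0:ℝ) < γ := hγ'
    have hγ0 : γ ≠ 0 := ne_of_gt hγ
    have hM : (1 / γ) • L + D = (1 / γ) • (L + γ • D) := by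
      rw [smul_add, smul_smul, one_div, inv_mul_cancel₀ hγ0, one_smul]
    have hdM : IsUnit ((1 / γ) • L + D).det := by
      rw [hM, Matrix.det_smul]
      exact (IsUnit.pow _ (Ne.isUnit (one_div_ne_zero hγ0))).mul
        (Ne.isUnit (hNpd γ hγ).det_pos.ne')
    set v := ((1 / γ) • L + D)⁻¹ *ᵥ Iinj with hv
    have hMv : ((1 / γ) • L + D) *ᵥ v = Iinj := by
      rw [hv, Matrix.mulVec_mulVec, Matrix.mul_nonsing_inv _ hdM, Matrix.one_mulVec]
    have hcol : ∀ j, ∑ i, ((1 / γ) • L + D) i j = kp j := by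
      intro j
      simp only [Matrix.add_apply, Matrix.smul_apply, smul_eq_mul, hD, Matrix.diagonal_apply]
      rw [Finset.sum_add_distrib, ← Finset.mul_sum, hcolsum j, mul_zero, zero_add]
      simp
    have h2 : ∑ i, (((1 / γ) • L + D) *ᵥ v) i = ∑ j, kp j * v j := by
      simp only [Matrix.mulVec, dotProduct]
      rw [Finset.sum_comm]
      refine Finset.sum_congr rfl fun j _ => ?_
      rw [← Finset.sum_mul, hcol j]
    rw [← h2, hMv]
  -- pass the identity to the limit
  have hF : Continuous fun w : Fin n → ℝ => ∑ i, kp i * w i :=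
    continuous_finset_sum _ fun i _ => continuous_const.mul (continuous_apply i)
  have hFt : Tendsto (fun γ : ℝ => ∑ i, kp i * ((((1 / γ) • L + D)⁻¹ *ᵥ Iinj) i))
      (nhdsWithin 0 (Set.Ioi 0)) (nhds (∑ i, kp i * g 0 i)) :=
    (hF.tendsto _).comp htend
  have hev : (fun γ : ℝ => ∑ i, kp i * ((((1 / γ) • L + D)⁻¹ *ᵥ Iinj) i))
      =ᶠ[nhdsWithin (0:ℝ) (Set.Ioi 0)] fun _ => ∑ i, Iinj i := by
    filter_upwards [self_mem_nhdsWithin] with γ hγ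
    exact hsumid γ hγ
  have huniq : ∑ i, kp i * g 0 i = ∑ i, Iinj i :=
    tendsto_nhds_unique hFt (Tendsto.congr' hev.symm tendsto_const_nhds)
  -- compute the limit value
  have hsk : 0 < ∑ i, kp i := Finset.sum_pos (fun i _ => hkp i) Finset.univ_nonempty
  have hβ : (q 0)⁻¹ * c = (∑ i, Iinj i) / (∑ i, kp i) := by
    have h3 : (∑ i, kp i) * ((q 0)⁻¹ * c) = ∑ i, Iinj i := by
      rw [← huniq, hg0, Finset.sum_mul]
    rw [eq_div_iff hsk.ne', mul_comm ((q 0)⁻¹ * c) _, h3]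
  have hfin : g 0 = fun _ : Fin n => (∑ i, Iinj i) / (∑ i, kp i) := by
    rw [hg0]
    funext j
    rw [hβ]
  rw [← hfin]
  exact htend
end

section
/- In the zero-resistance limit, the droop control injection u = -K^P (L_γ^{-1} I^inj) converges as γ → 0+ to u* = -((Σ_i I_i^inj)/(Σ_i K^P_i)) K^P 1_n, which equals the optimal current-sharing solution μ F^{-1} 1_n with F^{-1} = K^P. -/
open Matrix Finset Filter
open scoped Topology

/-- In the zero-resistance limit the droop injection `u = -Kᴾ (L_γ⁻¹ I)` converges to
`u* = -((∑ I i)/(∑ Kᴾ i)) Kᴾ 1ₙ`, which equals the optimal sharing solution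
`μ F⁻¹ 1ₙ` with `F⁻¹ = Kᴾ`. -/
theorem stmt7 (n : ℕ) (hn : 0 < n) (L : Matrix (Fin n) (Fin n) ℝ)
    (hLpsd : L.PosSemidef)
    (hker : ∀ v : Fin n → ℝ, L *ᵥ v = 0 ↔ ∃ c : ℝ, v = fun _ => c)
    (kp : Fin n → ℝ) (hkp : ∀ i, 0 < kp i)
    (Iinj : Fin n → ℝ) :
    letI μ : ℝ := -(∑ i, Iinj i) / (∑ i, kp i)
    letI ustar : Fin n → ℝ := fun i => μ * kp i
    Tendsto
        (fun γ : ℝ =>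
          -(Matrix.diagonal kp *ᵥ (((1 / γ) • L + Matrix.diagonal kp)⁻¹ *ᵥ Iinj)))
        (nhdsWithin 0 (Set.Ioi 0)) (nhds ustar) ∧
      ustar = μ • ((Matrix.diagonal fun i => (kp i)⁻¹)⁻¹ *ᵥ fun _ : Fin n => 1) := by
  classical
  have hn' : (0:ℝ) < n := by exact_mod_cast hn
  set i₀ : Fin n := ⟨0, hn⟩ with hi₀
  set K : Matrix (Fin n) (Fin n) ℝ := Matrix.diagonal kp with hK
  set one1 : Fin n → ℝ := fun _ => 1 with hone1
  set A : ℝ → Matrix (Fin n) (Fin n) ℝ := fun γ => L + γ • K with hA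
  have hA0 : A 0 = L := by simp [hA]
  have hAcont : Continuous A := by
    apply continuous_const.add
    exact continuous_id.smul continuous_const
  have hL1 : L *ᵥ one1 = 0 := (hker one1).mpr ⟨1, rfl⟩
  have hLsym : Lᵀ = L := by
    have := hLpsd.isHermitian
    rw [← Matrix.conjTranspose_eq_transpose_of_trivial]; exact this
  -- det L = 0
  have hdetL : L.det = 0 := by
    have h1 : (adjugate L * L) *ᵥ one1 = L.det • one1 := by
      rw [adjugate_mul, Matrix.smul_mulVec, one_mulVec]
    have h2 : (adjugate L * L) *ᵥ one1 = 0 := by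
      rw [← mulVec_mulVec, hL1, mulVec_zero]
    have h3 := congrFun (h1.symm.trans h2) i₀
    simpa [one1] using h3
  have hmulLadj : L * adjugate L = 0 := by
    rw [mul_adjugate, hdetL, zero_smul]
  -- columns of adjugate L are constant
  have hcol : ∀ j, ∃ c, (fun i => adjugate L i j) = fun _ => c := by
    intro j
    apply (hker _).mp
    have : L *ᵥ (fun i => adjugate L i j) = fun i => (L * adjugate L) i j := by
      funext i
      simp [Matrix.mulVec, Matrix.mul_apply, dotProduct]
    rw [this, hmulLadj]
    rfl
  have hadjsym : ∀ i j, adjugate L i j = adjugate L j i := by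
    intro i j
    have hT : (adjugate L)ᵀ = adjugate L := by
      rw [adjugate_transpose, hLsym]
    calc adjugate L i j = (adjugate L)ᵀ j i := rfl
      _ = adjugate L j i := by rw [hT]
  set s : ℝ := adjugate L i₀ i₀ with hs
  have hadj : ∀ i j, adjugate L i j = s := by
    intro i j
    obtain ⟨cj, hcj⟩ := hcol j
    obtain ⟨c0, hc0⟩ := hcol i₀
    have e1 : adjugate L i j = cj := congrFun hcj i
    have e2 : adjugate L i₀ j = cj := congrFun hcj i₀
    have e3 : adjugate L j i₀ = c0 := congrFun hc0 j
    have e4 : adjugate L i₀ i₀ = c0 := congrFun hc0 i₀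
    rw [e1, ← e2, hadjsym i₀ j, e3, hs, e4]
  -- polynomial structure of det (A γ)
  set Mp : Matrix (Fin n) (Fin n) (Polynomial ℝ) :=
    L.map Polynomial.C + (Polynomial.X : Polynomial ℝ) • K.map Polynomial.C with hMp
  have hdetMp : ∀ γ : ℝ, Polynomial.eval γ Mp.det = (A γ).det := by
    intro γ
    have hmap : Mp.map (Polynomial.eval γ) = A γ := by
      ext i j
      simp only [hMp, hA, Matrix.map_apply, Matrix.add_apply, Matrix.smul_apply,
        smul_eq_mul, Polynomial.eval_add, Polynomial.eval_mul, Polynomial.eval_X,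
        Polynomial.eval_C]
    have hd := RingHom.map_det (Polynomial.evalRingHom γ) Mp
    rw [RingHom.mapMatrix_apply, Polynomial.coe_evalRingHom] at hd
    rw [← hmap, ← hd]
  have hXdvd : Polynomial.X ∣ Mp.det := by
    rw [Polynomial.X_dvd_iff, Polynomial.coeff_zero_eq_eval_zero, hdetMp 0, hA0, hdetL]
  obtain ⟨q, hq⟩ := hXdvd
  set h : ℝ → ℝ := fun γ => q.eval γ with hh
  have hdetA : ∀ γ : ℝ, (A γ).det = γ * h γ := by
    intro γ
    rw [← hdetMp, hq]
    simp [hh]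
  have hqcont : Continuous h := q.continuous
  have hadjcont : Continuous fun γ => adjugate (A γ) := hAcont.matrix_adjugate
  -- identity: adjugate (A γ) *ᵥ kp = h γ • one1 for γ ≠ 0
  have hKone : K *ᵥ one1 = kp := by
    funext i
    simp [hK, Matrix.mulVec_diagonal, hone1]
  have hAone : ∀ γ : ℝ, A γ *ᵥ one1 = γ • kp := by
    intro γ
    rw [hA]
    simp only [Matrix.add_mulVec, hL1, Matrix.smul_mulVec, hKone, zero_add]
  have hid1 : ∀ γ : ℝ, γ ≠ 0 → adjugate (A γ) *ᵥ kp = h γ • one1 := by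
    intro γ hγ
    have h1 : adjugate (A γ) *ᵥ (A γ *ᵥ one1) = (A γ).det • one1 := by
      rw [mulVec_mulVec, adjugate_mul, Matrix.smul_mulVec, one_mulVec]
    rw [hAone, Matrix.mulVec_smul, hdetA, mul_smul] at h1
    exact smul_right_injective (Fin n → ℝ) hγ h1
  have hh0 : h 0 = s * ∑ i, kp i := by
    have t1 : Tendsto (fun γ => adjugate (A γ) *ᵥ kp) (𝓝[>] (0:ℝ))
        (𝓝 (adjugate L *ᵥ kp)) := by
      have hc : Continuous fun γ => adjugate (A γ) *ᵥ kp :=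
        hadjcont.matrix_mulVec continuous_const
      simpa [hA0] using (hc.tendsto 0).mono_left nhdsWithin_le_nhds
    have t2 : Tendsto (fun γ : ℝ => h γ • one1) (𝓝[>] (0:ℝ)) (𝓝 (h 0 • one1)) :=
      ((hqcont.smul continuous_const).tendsto 0).mono_left nhdsWithin_le_nhds
    have heq : (fun γ => adjugate (A γ) *ᵥ kp) =ᶠ[𝓝[>] (0:ℝ)] fun γ => h γ • one1 :=
      eventually_mem_nhdsWithin.mono fun γ hγ => hid1 γ (ne_of_gt hγ)
    have huniq : adjugate L *ᵥ kp = h 0 • one1 :=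
      tendsto_nhds_unique (t1.congr' heq) t2
    have := congrFun huniq i₀
    simp only [Matrix.mulVec, dotProduct, Pi.smul_apply, hone1, smul_eq_mul, mul_one] at this
    rw [← this]
    simp_rw [hadj]
    rw [← Finset.mul_sum]
  -- positivity of s
  set U : Matrix (Fin n) (Fin n) ℝ :=
    Matrix.replicateCol (Fin 1) one1 * Matrix.replicateRow (Fin 1) one1 with hU
  have hUapp : ∀ i j, U i j = 1 := by
    intro i j
    simp [hU, Matrix.mul_apply, hone1]
  have hUx : ∀ x : Fin n → ℝ, x ⬝ᵥ (U *ᵥ x) = (∑ i, x i) ^ 2 := by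
    intro x
    simp only [dotProduct, Matrix.mulVec, hUapp, one_mul]
    rw [sq, Finset.sum_mul]
  have hLU : (L + U).PosDef := by
    rw [Matrix.posDef_iff_dotProduct_mulVec]
    constructor
    · have hUherm : U.IsHermitian := by
        ext i j
        simp [Matrix.conjTranspose_apply, hUapp]
      exact hLpsd.isHermitian.add hUherm
    · intro x hx
      have hxs : star x = x := by simp
      rw [hxs, Matrix.add_mulVec, dotProduct_add, hUx]
      have h1 : 0 ≤ x ⬝ᵥ L *ᵥ x := by
        have := hLpsd.dotProduct_mulVec_nonneg x
        rwa [hxs] at this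
      rcases h1.lt_or_eq with hlt | heq
      · exact add_pos_of_pos_of_nonneg hlt (sq_nonneg _)
      · have hLx : L *ᵥ x = 0 := by
          have := (hLpsd.dotProduct_mulVec_zero_iff x).mp (by rw [hxs, ← heq])
          exact this
        obtain ⟨c, rfl⟩ := (hker x).mp hLx
        have hc : c ≠ 0 := by
          intro hc0
          apply hx
          funext i
          simp [hc0]
        have : (∑ _i : Fin n, c) = n * c := by
          simp [Finset.sum_const, mul_comm]
        rw [this, ← heq, zero_add]
        positivity
  have hPDγ : ∀ γ : ℝ, 0 < γ → (A γ).PosDef := by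
    intro γ hγ
    have hKpd : (γ • K).PosDef := by
      rw [hK, ← Matrix.diagonal_smul]
      exact posDef_diagonal_iff.mpr fun i => mul_pos hγ (hkp i)
    exact Matrix.PosDef.posSemidef_add hLpsd hKpd
  have hid2 : ∀ γ : ℝ, 0 < γ →
      (A γ + U).det = (A γ).det + ∑ j, ∑ k, adjugate (A γ) j k := by
    intro γ hγ
    have hdetne : (A γ).det ≠ 0 := (hPDγ γ hγ).det_pos.ne'
    have hdu : IsUnit (A γ).det := hdetne.isUnit
    rw [hU]
    erw [Matrix.det_add_replicateCol_mul_replicateRow (ι := Fin 1) hdu one1 one1]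
    simp only [Matrix.det_unique]
    simp only [Matrix.add_apply, Matrix.one_apply_eq, Matrix.mul_apply, Matrix.replicateRow_apply,
      Matrix.replicateCol_apply, hone1, one_mul, mul_one, Finset.univ_unique, Finset.sum_singleton,
      Matrix.inv_def, Ring.inverse_eq_inv, Matrix.smul_apply, smul_eq_mul]
    rw [mul_add, mul_one]
    congr 1
    rw [Finset.mul_sum]
    refine (Finset.sum_congr rfl fun k _ => ?_).trans Finset.sum_comm
    rw [Finset.mul_sum]
    exact Finset.sum_congr rfl fun j _ => by rw [mul_inv_cancel_left₀ hdetne]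
  have hsval : (L + U).det = (n:ℝ) ^ 2 * s := by
    have t1 : Tendsto (fun γ => (A γ + U).det) (𝓝[>] (0:ℝ)) (𝓝 ((L + U).det)) := by
      have hc : Continuous fun γ => (A γ + U).det :=
        (hAcont.add continuous_const).matrix_det
      simpa [hA0] using (hc.tendsto 0).mono_left nhdsWithin_le_nhds
    have t2 : Tendsto (fun γ => (A γ).det + ∑ j, ∑ k, adjugate (A γ) j k)
        (𝓝[>] (0:ℝ)) (𝓝 (L.det + ∑ j, ∑ k, adjugate L j k)) := by
      have hc : Continuous fun γ => (A γ).det + ∑ j, ∑ k, adjugate (A γ) j k := by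
        apply hAcont.matrix_det.add
        apply continuous_finset_sum
        intro j _
        apply continuous_finset_sum
        intro k _
        exact (continuous_apply k).comp ((continuous_apply j).comp hadjcont)
      simpa [hA0] using (hc.tendsto 0).mono_left nhdsWithin_le_nhds
    have heq : (fun γ => (A γ + U).det)
        =ᶠ[𝓝[>] (0:ℝ)] fun γ => (A γ).det + ∑ j, ∑ k, adjugate (A γ) j k :=
      eventually_mem_nhdsWithin.mono fun γ hγ => hid2 γ hγ
    have huniq : (L + U).det = L.det + ∑ j, ∑ k, adjugate L j k :=
      tendsto_nhds_unique (t1.congr' heq) t2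
    rw [huniq, hdetL, zero_add]
    simp_rw [hadj]
    simp [Finset.sum_const, sq]
    ring
  have hspos : 0 < s := by
    have hd := hLU.det_pos
    rw [hsval] at hd
    nlinarith [hn']
  have hSk : 0 < ∑ i, kp i := by
    apply Finset.sum_pos (fun i _ => hkp i)
    exact ⟨i₀, Finset.mem_univ i₀⟩
  have hh0ne : h 0 ≠ 0 := by
    rw [hh0]
    positivity
  -- main pointwise identity on γ > 0
  have hmain : ∀ γ : ℝ, 0 < γ →
      -(K *ᵥ (((1 / γ) • L + K)⁻¹ *ᵥ Iinj))
        = -(K *ᵥ ((h γ)⁻¹ • (adjugate (A γ) *ᵥ Iinj))) := by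
    intro γ hγ
    have hγ0 : γ ≠ 0 := hγ.ne'
    have hB : (1 / γ) • L + K = γ⁻¹ • A γ := by
      rw [hA]
      rw [smul_add, smul_smul, inv_mul_cancel₀ hγ0, one_smul, one_div]
    have hinv : ((1 / γ) • L + K)⁻¹ = (h γ)⁻¹ • adjugate (A γ) := by
      rw [hB, Matrix.inv_def, Matrix.det_smul, Matrix.adjugate_smul,
        Ring.inverse_eq_inv, hdetA, smul_smul]
      congr 1
      obtain ⟨m, rfl⟩ : ∃ m, n = m + 1 := ⟨n - 1, (Nat.succ_pred_eq_of_pos hn).symm⟩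
      simp only [Fintype.card_fin, Nat.add_sub_cancel, pow_succ]
      rw [mul_inv, mul_inv, mul_inv]
      field_simp
    rw [hinv, Matrix.smul_mulVec]
  -- the limit function
  set G : ℝ → (Fin n → ℝ) :=
    fun γ => -(K *ᵥ ((h γ)⁻¹ • (adjugate (A γ) *ᵥ Iinj))) with hG
  have hGcont : ContinuousAt G 0 := by
    have c1 : Continuous fun γ => adjugate (A γ) *ᵥ Iinj :=
      hadjcont.matrix_mulVec continuous_const
    have c2 : ContinuousAt (fun γ => (h γ)⁻¹) 0 := hqcont.continuousAt.inv₀ hh0ne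
    have c3 : ContinuousAt (fun γ => (h γ)⁻¹ • (adjugate (A γ) *ᵥ Iinj)) 0 :=
      c2.smul c1.continuousAt
    have c4 : Continuous fun v : Fin n → ℝ => -(K *ᵥ v) :=
      (continuous_const.matrix_mulVec continuous_id).neg
    exact c4.continuousAt.comp c3
  have hG0 : G 0 = fun i => (-(∑ i, Iinj i) / (∑ i, kp i)) * kp i := by
    funext i
    have hadjI : (adjugate L *ᵥ Iinj) i = s * ∑ j, Iinj j := by
      simp only [Matrix.mulVec, dotProduct]
      simp_rw [hadj]
      rw [← Finset.mul_sum]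
    simp only [hG, hA0, Pi.neg_apply]
    rw [hK]
    simp only [Matrix.mulVec_diagonal, Pi.smul_apply, smul_eq_mul, hadjI, hh0]
    field_simp
  refine ⟨?_, ?_⟩
  · have ht : Tendsto G (𝓝[>] (0:ℝ)) (𝓝 (G 0)) :=
      hGcont.tendsto.mono_left nhdsWithin_le_nhds
    have heq : G =ᶠ[𝓝[>] (0:ℝ)]
        fun γ : ℝ => -(K *ᵥ (((1 / γ) • L + K)⁻¹ *ᵥ Iinj)) :=
      eventually_mem_nhdsWithin.mono fun γ hγ => (hmain γ hγ).symm
    have := ht.congr' heq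
    rw [hG0] at this
    exact this
  · have hdiag : (Matrix.diagonal fun i => (kp i)⁻¹)⁻¹ = Matrix.diagonal kp := by
      apply Matrix.inv_eq_right_inv
      rw [Matrix.diagonal_mul_diagonal]
      have : (fun i => (kp i)⁻¹ * kp i) = fun _ : Fin n => (1:ℝ) := by
        funext i
        exact inv_mul_cancel₀ (hkp i).ne'
      rw [this, Matrix.diagonal_one]
    rw [hdiag]
    funext i
    simp only [Matrix.mulVec_diagonal, Pi.smul_apply, smul_eq_mul, hone1, mul_one]
end

section
/- For the deadband-PI closed-loop system with uniform voltage bounds, every trajectory converges to the set where all voltages lie within the operating range: lim_{t→∞} dist(V'(t), {V' : a ≤ V'_i ≤ b ∀i}) = 0. -/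
open Matrix Finset Filter

section Stmt14Aux
open Filter Set


lemma maxsq_hasDerivAt (y : ℝ) : HasDerivAt (fun x : ℝ => max x 0 ^ 2) (2 * max y 0) y := by
  rcases lt_trichotomy y 0 with h | h | h
  · have hev : (fun x : ℝ => max x 0 ^ 2) =ᶠ[nhds y] fun _ => (0 : ℝ) := by
      filter_upwards [Iio_mem_nhds h] with x hx
      simp [max_eq_right (le_of_lt (mem_Iio.mp hx))]
    have h0 : HasDerivAt (fun _ : ℝ => (0 : ℝ)) 0 y := hasDerivAt_const y 0
    have := h0.congr_of_eventuallyEq hev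
    simpa [max_eq_right h.le] using this
  · subst h
    rw [hasDerivAt_iff_tendsto_slope]
    have habs : Tendsto (fun x : ℝ => |x|) (nhdsWithin 0 {(0:ℝ)}ᶜ) (nhds 0) := by
      have : Tendsto (fun x : ℝ => |x|) (nhds 0) (nhds 0) := by
        simpa using continuous_abs.tendsto (0 : ℝ)
      exact this.mono_left nhdsWithin_le_nhds
    have : Tendsto (slope (fun x : ℝ => max x 0 ^ 2) 0) (nhdsWithin 0 {(0:ℝ)}ᶜ) (nhds 0) := by
      apply squeeze_zero' (g := fun x : ℝ => |x|)
      · filter_upwards [self_mem_nhdsWithin] with x hx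
        have hx' : x ≠ 0 := hx
        rcases hx'.lt_or_gt with hlt | hgt
        · simp [slope_def_field, max_eq_right hlt.le]
        · have : slope (fun x : ℝ => max x 0 ^ 2) 0 x = x := by
            rw [slope_def_field, max_eq_left hgt.le, max_self]
            field_simp
            ring
          rw [this]; exact hgt.le
      · filter_upwards [self_mem_nhdsWithin] with x hx
        have hx' : x ≠ 0 := hx
        rcases hx'.lt_or_gt with hlt | hgt
        · simp [slope_def_field, max_eq_right hlt.le]
        · have : slope (fun x : ℝ => max x 0 ^ 2) 0 x = x := by
            rw [slope_def_field, max_eq_left hgt.le, max_self]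
            field_simp
            ring
          rw [this]; exact le_abs_self x
      · exact habs
    simpa using this
  · have hev : (fun x : ℝ => max x 0 ^ 2) =ᶠ[nhds y] fun x => x ^ 2 := by
      filter_upwards [Ioi_mem_nhds h] with x hx
      simp [max_eq_left (le_of_lt (mem_Ioi.mp hx))]
    have h2 : HasDerivAt (fun x : ℝ => x ^ 2) (2 * y) y := by
      simpa using hasDerivAt_pow 2 y
    have := h2.congr_of_eventuallyEq hev
    simpa [max_eq_left h.le] using this

lemma psi_hasDerivAt (a b x : ℝ) :
    HasDerivAt (fun y : ℝ => (max (y - b) 0 ^ 2 + max (a - y) 0 ^ 2) / 2)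
      (max (x - b) 0 - max (a - x) 0) x := by
  have h1 : HasDerivAt (fun y : ℝ => max (y - b) 0 ^ 2) (2 * max (x - b) 0) x := by
    have := (maxsq_hasDerivAt (x - b)).comp x ((hasDerivAt_id x).sub_const b)
    exact this.congr_deriv (by ring)
  have h2 : HasDerivAt (fun y : ℝ => max (a - y) 0 ^ 2) (-(2 * max (a - x) 0)) x := by
    have := (maxsq_hasDerivAt (a - x)).comp x ((hasDerivAt_const x a).sub (hasDerivAt_id x))
    exact this.congr_deriv (by ring)
  have := (h1.add h2).div_const 2
  exact this.congr_deriv (by ring)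

lemma mvt_abs {f f' : ℝ → ℝ} (hf : ∀ t, HasDerivAt f (f' t) t) {s t m : ℝ} (hst : s ≤ t)
    (hb : ∀ u, s ≤ u → u ≤ t → |f' u| ≤ m) : |f t - f s| ≤ m * (t - s) := by
  have := norm_image_sub_le_of_norm_deriv_le_segment' (a := s) (b := t) (f := f) (f' := f')
    (fun x _ => (hf x).hasDerivWithinAt) (fun x hx => by
      simpa [Real.norm_eq_abs] using hb x hx.1 hx.2.le) t (right_mem_Icc.mpr hst)
  simpa [Real.norm_eq_abs] using this

lemma lip_of_deriv {f f' : ℝ → ℝ} (hf : ∀ t, HasDerivAt f (f' t) t) {m : ℝ}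
    (hb : ∀ u, 0 ≤ u → |f' u| ≤ m) {s t : ℝ} (hs : 0 ≤ s) (ht : 0 ≤ t) :
    |f s - f t| ≤ m * |s - t| := by
  rcases le_total s t with h | h
  · have habs : |s - t| = t - s := by rw [abs_sub_comm]; exact abs_of_nonneg (by linarith)
    rw [abs_sub_comm, habs]
    exact mvt_abs hf h fun u hu1 _ => hb u (le_trans hs hu1)
  · have habs : |s - t| = s - t := abs_of_nonneg (by linarith)
    rw [habs]
    exact mvt_abs hf h fun u hu1 _ => hb u (le_trans ht hu1)

lemma barbalat (g g' : ℝ → ℝ) (hg : ∀ t, HasDerivAt g (g' t) t) (K l : ℝ)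
    (hK : ∀ s t, 0 ≤ s → 0 ≤ t → |g' s - g' t| ≤ K * |s - t|)
    (hl : Tendsto g atTop (nhds l)) : Tendsto g' atTop (nhds 0) := by
  rw [Metric.tendsto_atTop]
  intro ε hε
  have hK'pos : (0:ℝ) < max K 1 := lt_of_lt_of_le one_pos (le_max_right _ _)
  set K' := max K 1 with hK'
  set δ := ε / (2 * K') with hδ
  have hδpos : 0 < δ := div_pos hε (by positivity)
  obtain ⟨T, hT⟩ := Metric.tendsto_atTop.mp hl (δ * ε / 8) (by positivity)
  refine ⟨max T 0, fun t ht => ?_⟩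
  have ht0 : 0 ≤ t := le_trans (le_max_right T 0) ht
  have htT : T ≤ t := le_trans (le_max_left T 0) ht
  have hder : ∀ s : ℝ, HasDerivAt (fun u => g u - u * g' t) (g' s - g' t) s := by
    intro s
    have := (hg s).sub ((hasDerivAt_id s).mul_const (g' t))
    exact this.congr_deriv (by ring)
  have hmvt : |(g (t+δ) - (t+δ) * g' t) - (g t - t * g' t)| ≤ (ε/2) * ((t+δ) - t) := by
    apply mvt_abs (f := fun u => g u - u * g' t) (f' := fun s => g' s - g' t) hder (by linarith)
    intro u hu1 hu2
    calc |g' u - g' t| ≤ K * |u - t| := hK u t (le_trans ht0 hu1) ht0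
      _ ≤ K' * δ := by
          have h1 : |u - t| ≤ δ := by rw [abs_of_nonneg (by linarith)]; linarith
          calc K * |u - t| ≤ K' * |u - t| :=
                mul_le_mul_of_nonneg_right (le_max_left _ _) (abs_nonneg _)
            _ ≤ K' * δ := mul_le_mul_of_nonneg_left h1 hK'pos.le
      _ = ε / 2 := by rw [hδ]; field_simp
  have hgd : |g (t+δ) - g t| < δ * ε / 4 := by
    have h1 := hT t htT
    have h2 := hT (t+δ) (by linarith)
    rw [Real.dist_eq] at h1 h2
    calc |g (t+δ) - g t| = |(g (t+δ) - l) - (g t - l)| := by ring_nf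
      _ ≤ |g (t+δ) - l| + |g t - l| := abs_sub _ _
      _ < δ*ε/8 + δ*ε/8 := add_lt_add h2 h1
      _ = δ*ε/4 := by ring
  have hid : (g (t+δ) - (t+δ) * g' t) - (g t - t * g' t) = (g (t+δ) - g t) - δ * g' t := by ring
  rw [hid] at hmvt
  have hmvt' : |(g (t+δ) - g t) - δ * g' t| ≤ (ε/2) * δ := by
    have : (t + δ) - t = δ := by ring
    rwa [this] at hmvt
  have h3 : δ * |g' t| ≤ |g (t+δ) - g t| + (ε/2) * δ := by
    calc δ * |g' t| = |δ * g' t| := by rw [abs_mul, abs_of_nonneg hδpos.le]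
      _ = |(g (t+δ) - g t) - ((g (t+δ) - g t) - δ * g' t)| := by ring_nf
      _ ≤ |g (t+δ) - g t| + |(g (t+δ) - g t) - δ * g' t| := abs_sub _ _
      _ ≤ |g (t+δ) - g t| + (ε/2) * δ := by linarith
  rw [Real.dist_eq, sub_zero]
  nlinarith [abs_nonneg (g' t), hδpos, hε, mul_pos hδpos hε]

lemma clamp_eq {a b : ℝ} (x : ℝ) (hab : a ≤ b) :
    x - max a (min x b) = max (x - b) 0 - max (a - x) 0 := by
  simp only [max_def, min_def]
  split_ifs <;> linarith

end Stmt14Aux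

/-- Every trajectory of the deadband-PI closed loop with uniform voltage bounds
converges to the set where all voltages lie within the operating range `[a,b]`. -/
theorem stmt14 (n : ℕ) (L : Matrix (Fin n) (Fin n) ℝ)
    (hLpsd : L.PosSemidef)
    (hker : ∀ v : Fin n → ℝ, L *ᵥ v = 0 ↔ ∃ c : ℝ, v = fun _ => c)
    (c kp kI : Fin n → ℝ) (hc : ∀ i, 0 < c i) (hkp : ∀ i, 0 < kp i)
    (hkI : ∀ i, 0 < kI i)
    (a b : ℝ) (ha : a ≤ 0) (hb : 0 ≤ b)
    (V z : ℝ → Fin n → ℝ)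
    (hV : ∀ t : ℝ, HasDerivAt V
        (-(Matrix.diagonal (fun i => (c i)⁻¹) *ᵥ (L *ᵥ V t))
          - Matrix.diagonal (fun i => (c i)⁻¹) *ᵥ (Matrix.diagonal kp *ᵥ V t)
          - Matrix.diagonal (fun i => (c i)⁻¹) *ᵥ (Matrix.diagonal kI *ᵥ z t)) t)
    (hz : ∀ t : ℝ, HasDerivAt z
        (fun i => max (V t i - b) 0 - max (a - V t i) 0) t) :
    Tendsto (fun t => Metric.infDist (V t) {x : Fin n → ℝ | ∀ i, a ≤ x i ∧ x i ≤ b})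
      atTop (nhds 0) := by
  -- named defs
  obtain ⟨D, hDf⟩ : ∃ D : ℝ → Fin n → ℝ,
      D = fun t i => -((L *ᵥ V t) i + kp i * V t i + kI i * z t i) / c i := ⟨_, rfl⟩
  have hD : ∀ t i, D t i = -((L *ᵥ V t) i + kp i * V t i + kI i * z t i) / c i := by
    intro t i; rw [hDf]
  obtain ⟨F, hFf⟩ : ∃ F : ℝ → Fin n → ℝ,
      F = fun t i => max (V t i - b) 0 - max (a - V t i) 0 := ⟨_, rfl⟩
  have hF : ∀ t i, F t i = max (V t i - b) 0 - max (a - V t i) 0 := by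
    intro t i; rw [hFf]
  obtain ⟨A, hAf⟩ : ∃ A : ℝ → Fin n → ℝ,
      A = fun t i => -((L *ᵥ D t) i + kp i * D t i + kI i * F t i) / c i := ⟨_, rfl⟩
  have hA : ∀ t i, A t i = -((L *ᵥ D t) i + kp i * D t i + kI i * F t i) / c i := by
    intro t i; rw [hAf]
  -- derivative of V is D
  have hV' : ∀ t, HasDerivAt V (D t) t := by
    intro t
    convert hV t using 1
    funext i
    have hci := (hc i).ne'
    rw [hD]
    simp only [Pi.sub_apply, Pi.neg_apply, Matrix.mulVec_diagonal]
    field_simp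
    ring
  have hVi : ∀ t i, HasDerivAt (fun s => V s i) (D t i) t := fun t i =>
    hasDerivAt_pi.mp (hV' t) i
  have hzi : ∀ t i, HasDerivAt (fun s => z s i) (F t i) t := by
    intro t i
    rw [hF]
    exact hasDerivAt_pi.mp (hz t) i
  have hLVi : ∀ t i, HasDerivAt (fun s => (L *ᵥ V s) i) ((L *ᵥ D t) i) t := by
    intro t i
    have : HasDerivAt (fun s => ∑ j, L i j * V s j) (∑ j, L i j * D t j) t :=
      HasDerivAt.fun_sum fun j _ => (hVi t j).const_mul (L i j)
    simpa [Matrix.mulVec, dotProduct] using this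
  have hDi : ∀ t i, HasDerivAt (fun s => D s i) (A t i) t := by
    intro t i
    have h1 : HasDerivAt (fun s => -((L *ᵥ V s) i + kp i * V s i + kI i * z s i) / c i)
        (-((L *ᵥ D t) i + kp i * D t i + kI i * F t i) / c i) t :=
      ((((hLVi t i).add ((hVi t i).const_mul (kp i))).add
        ((hzi t i).const_mul (kI i))).neg).div_const (c i)
    rw [hA]
    have heq : (fun s => D s i) = fun s => -((L *ᵥ V s) i + kp i * V s i + kI i * z s i) / c i := by
      funext s; rw [hD]
    rw [heq]
    exact h1
  have hLDi : ∀ t i, HasDerivAt (fun s => (L *ᵥ D s) i) ((L *ᵥ A t) i) t := by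
    intro t i
    have : HasDerivAt (fun s => ∑ j, L i j * D s j) (∑ j, L i j * A t j) t :=
      HasDerivAt.fun_sum fun j _ => (hDi t j).const_mul (L i j)
    simpa [Matrix.mulVec, dotProduct] using this
  -- energy
  obtain ⟨E, hEf⟩ : ∃ E : ℝ → ℝ, E = fun t => (∑ i, c i * D t i ^ 2) / 2
      + ∑ i, kI i * ((max (V t i - b) 0 ^ 2 + max (a - V t i) 0 ^ 2) / 2) := ⟨_, rfl⟩
  have hE : ∀ t, E t = (∑ i, c i * D t i ^ 2) / 2
      + ∑ i, kI i * ((max (V t i - b) 0 ^ 2 + max (a - V t i) 0 ^ 2) / 2) := by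
    intro t; rw [hEf]
  obtain ⟨E', hE'f⟩ : ∃ E' : ℝ → ℝ,
      E' = fun t => -(∑ i, D t i * (L *ᵥ D t) i) - ∑ i, kp i * D t i ^ 2 := ⟨_, rfl⟩
  have hE' : ∀ t, E' t = -(∑ i, D t i * (L *ᵥ D t) i) - ∑ i, kp i * D t i ^ 2 := by
    intro t; rw [hE'f]
  have hcA : ∀ t i, c i * A t i = -((L *ᵥ D t) i + kp i * D t i + kI i * F t i) := by
    intro t i
    rw [hA, mul_comm, div_mul_cancel₀ _ (hc i).ne']
  have hEd : ∀ t, HasDerivAt E (E' t) t := by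
    intro t
    have hsum1 : HasDerivAt (fun s => ∑ i, c i * D s i ^ 2)
        (∑ i, c i * (2 * D t i * A t i)) t := by
      refine HasDerivAt.fun_sum fun i _ => ?_
      have := ((hDi t i).pow 2).const_mul (c i)
      simpa [mul_assoc] using this
    have hsum2 : HasDerivAt
        (fun s => ∑ i, kI i * ((max (V s i - b) 0 ^ 2 + max (a - V s i) 0 ^ 2) / 2))
        (∑ i, kI i * (F t i * D t i)) t := by
      refine HasDerivAt.fun_sum fun i _ => ?_
      have hpsi := (psi_hasDerivAt a b (V t i)).comp t (hVi t i)
      have := hpsi.const_mul (kI i)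
      rw [hF]
      exact this
    have htot := (hsum1.div_const 2).add hsum2
    rw [hEf]
    refine htot.congr_deriv (Eq.symm ?_)
    rw [hE', Finset.sum_div, ← Finset.sum_add_distrib]
    rw [show -(∑ i, D t i * (L *ᵥ D t) i) - ∑ i, kp i * D t i ^ 2
        = ∑ i, (-(D t i * (L *ᵥ D t) i) - kp i * D t i ^ 2) by
      rw [Finset.sum_sub_distrib, Finset.sum_neg_distrib]]
    refine Finset.sum_congr rfl fun i _ => ?_
    have h2 : c i * (2 * D t i * A t i) / 2 = D t i * (c i * A t i) := by ring
    rw [h2, hcA]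
    ring

  -- PSD and sign facts
  have hpsd : ∀ v : Fin n → ℝ, 0 ≤ ∑ i, v i * (L *ᵥ v) i := by
    intro v
    have := hLpsd.dotProduct_mulVec_nonneg v
    simpa [dotProduct] using this
  have hkpD : ∀ t, 0 ≤ ∑ i, kp i * D t i ^ 2 :=
    fun t => Finset.sum_nonneg fun i _ => mul_nonneg (hkp i).le (sq_nonneg _)
  have hE'le : ∀ t, E' t ≤ 0 := by
    intro t; rw [hE']
    have h1 := hpsd (D t); have h2 := hkpD t; linarith
  have hE'bound : ∀ t, ∑ i, kp i * D t i ^ 2 ≤ -E' t := by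
    intro t; rw [hE']
    have := hpsd (D t); linarith
  have hEnn : ∀ t, 0 ≤ E t := by
    intro t; rw [hE]
    have h1 : 0 ≤ ∑ i, c i * D t i ^ 2 :=
      Finset.sum_nonneg fun i _ => mul_nonneg (hc i).le (sq_nonneg _)
    have h2 : 0 ≤ ∑ i, kI i * ((max (V t i - b) 0 ^ 2 + max (a - V t i) 0 ^ 2) / 2) :=
      Finset.sum_nonneg fun i _ => mul_nonneg (hkI i).le (by positivity)
    linarith
  have hanti : Antitone E :=
    antitone_of_deriv_nonpos (fun t => (hEd t).differentiableAt) (fun t => by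
      rw [(hEd t).deriv]; exact hE'le t)
  have hElim : Tendsto E atTop (nhds (⨅ t, E t)) :=
    tendsto_atTop_ciInf hanti ⟨0, by rintro x ⟨t, rfl⟩; exact hEnn t⟩
  -- bounds on the trajectory for t ≥ 0
  have hEle : ∀ t, 0 ≤ t → E t ≤ E 0 := fun t ht => hanti ht
  have hDsq : ∀ t, 0 ≤ t → ∀ i, D t i ^ 2 ≤ 2 * E 0 / c i := by
    intro t ht i
    have h1 : c i * D t i ^ 2 ≤ ∑ j, c j * D t j ^ 2 :=
      Finset.single_le_sum (fun j _ => mul_nonneg (hc j).le (sq_nonneg _)) (Finset.mem_univ i)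
    have h2 : 0 ≤ ∑ i, kI i * ((max (V t i - b) 0 ^ 2 + max (a - V t i) 0 ^ 2) / 2) :=
      Finset.sum_nonneg fun i _ => mul_nonneg (hkI i).le (by positivity)
    have h3 := hEle t ht
    rw [hE] at h3
    rw [le_div_iff₀ (hc i)]
    nlinarith
  have hFsq : ∀ t, 0 ≤ t → ∀ i, F t i ^ 2 ≤ 2 * E 0 / kI i := by
    intro t ht i
    have hterm : kI i * ((max (V t i - b) 0 ^ 2 + max (a - V t i) 0 ^ 2) / 2)
        ≤ ∑ j, kI j * ((max (V t j - b) 0 ^ 2 + max (a - V t j) 0 ^ 2) / 2) :=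
      Finset.single_le_sum (f := fun j => kI j * ((max (V t j - b) 0 ^ 2 + max (a - V t j) 0 ^ 2) / 2))
        (fun j _ => mul_nonneg (hkI j).le (by positivity)) (Finset.mem_univ i)
    have h1 : 0 ≤ ∑ i, c i * D t i ^ 2 :=
      Finset.sum_nonneg fun i _ => mul_nonneg (hc i).le (sq_nonneg _)
    have h3 := hEle t ht
    rw [hE] at h3
    have hFsq2 : F t i ^ 2 ≤ max (V t i - b) 0 ^ 2 + max (a - V t i) 0 ^ 2 := by
      rw [hF]
      have hm1 : (0:ℝ) ≤ max (V t i - b) 0 := le_max_right _ _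
      have hm2 : (0:ℝ) ≤ max (a - V t i) 0 := le_max_right _ _
      nlinarith [mul_nonneg hm1 hm2]
    rw [le_div_iff₀ (hkI i)]
    nlinarith [mul_le_mul_of_nonneg_left hFsq2 (hkI i).le]
  obtain ⟨BD, hBD0, hBD⟩ : ∃ B : ℝ, 0 ≤ B ∧ ∀ t, 0 ≤ t → ∀ i, |D t i| ≤ B := by
    refine ⟨∑ j, Real.sqrt (2 * E 0 / c j),
      Finset.sum_nonneg fun j _ => Real.sqrt_nonneg _, fun t ht i => ?_⟩
    calc |D t i| = Real.sqrt (D t i ^ 2) := by rw [Real.sqrt_sq_eq_abs]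
      _ ≤ Real.sqrt (2 * E 0 / c i) := Real.sqrt_le_sqrt (hDsq t ht i)
      _ ≤ ∑ j, Real.sqrt (2 * E 0 / c j) :=
          Finset.single_le_sum (f := fun j => Real.sqrt (2 * E 0 / c j))
            (fun j _ => Real.sqrt_nonneg _) (Finset.mem_univ i)
  obtain ⟨BF, hBF0, hBF⟩ : ∃ B : ℝ, 0 ≤ B ∧ ∀ t, 0 ≤ t → ∀ i, |F t i| ≤ B := by
    refine ⟨∑ j, Real.sqrt (2 * E 0 / kI j),
      Finset.sum_nonneg fun j _ => Real.sqrt_nonneg _, fun t ht i => ?_⟩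
    calc |F t i| = Real.sqrt (F t i ^ 2) := by rw [Real.sqrt_sq_eq_abs]
      _ ≤ Real.sqrt (2 * E 0 / kI i) := Real.sqrt_le_sqrt (hFsq t ht i)
      _ ≤ ∑ j, Real.sqrt (2 * E 0 / kI j) :=
          Finset.single_le_sum (f := fun j => Real.sqrt (2 * E 0 / kI j))
            (fun j _ => Real.sqrt_nonneg _) (Finset.mem_univ i)
  have hLbnd : ∀ (w : Fin n → ℝ) (Bw : ℝ), (∀ j, |w j| ≤ Bw) →
      ∀ i, |(L *ᵥ w) i| ≤ (∑ j, |L i j|) * Bw := by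
    intro w Bw hw i
    calc |(L *ᵥ w) i| = |∑ j, L i j * w j| := by simp [Matrix.mulVec, dotProduct]
      _ ≤ ∑ j, |L i j * w j| := Finset.abs_sum_le_sum_abs _ _
      _ ≤ ∑ j, |L i j| * Bw := Finset.sum_le_sum fun j _ => by
          rw [abs_mul]; exact mul_le_mul_of_nonneg_left (hw j) (abs_nonneg _)
      _ = (∑ j, |L i j|) * Bw := by rw [Finset.sum_mul]
  have hterm0 : ∀ i : Fin n, 0 ≤ ((∑ j, |L i j|) * BD + kp i * BD + kI i * BF) / c i := by
    intro i
    apply div_nonneg _ (hc i).le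
    have hs0 : 0 ≤ ∑ j, |L i j| := Finset.sum_nonneg fun j _ => abs_nonneg _
    have := mul_nonneg hs0 hBD0
    have := mul_nonneg (hkp i).le hBD0
    have := mul_nonneg (hkI i).le hBF0
    linarith
  obtain ⟨MA, hMA0, hMA⟩ : ∃ m : ℝ, 0 ≤ m ∧ ∀ t, 0 ≤ t → ∀ i, |A t i| ≤ m := by
    refine ⟨∑ i, ((∑ j, |L i j|) * BD + kp i * BD + kI i * BF) / c i,
      Finset.sum_nonneg fun i _ => hterm0 i, fun t ht i => ?_⟩
    have h1 : |(L *ᵥ D t) i + kp i * D t i + kI i * F t i|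
        ≤ (∑ j, |L i j|) * BD + kp i * BD + kI i * BF := by
      refine (abs_add_three _ _ _).trans ?_
      have hx := hLbnd (D t) BD (fun j => hBD t ht j) i
      have hy : |kp i * D t i| ≤ kp i * BD := by
        rw [abs_mul, abs_of_pos (hkp i)]
        exact mul_le_mul_of_nonneg_left (hBD t ht i) (hkp i).le
      have hz' : |kI i * F t i| ≤ kI i * BF := by
        rw [abs_mul, abs_of_pos (hkI i)]
        exact mul_le_mul_of_nonneg_left (hBF t ht i) (hkI i).le
      linarith
    have h2 : |A t i| ≤ ((∑ j, |L i j|) * BD + kp i * BD + kI i * BF) / c i := by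
      rw [hA, abs_div, abs_of_pos (hc i), abs_neg]
      exact (div_le_div_iff_of_pos_right (hc i)).mpr h1
    exact h2.trans (Finset.single_le_sum (f := fun i =>
      ((∑ j, |L i j|) * BD + kp i * BD + kI i * BF) / c i)
      (fun j _ => hterm0 j) (Finset.mem_univ i))
  -- Lipschitz bounds on [0, ∞)
  have hDlip : ∀ i, ∀ s t : ℝ, 0 ≤ s → 0 ≤ t → |D s i - D t i| ≤ MA * |s - t| :=
    fun i s t hs ht => lip_of_deriv (f' := fun u => A u i) (fun u => hDi u i)
      (fun u hu => hMA u hu i) hs ht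
  -- E' has a derivative, giving it a Lipschitz bound on [0,∞)
  have hE'd : ∀ t, HasDerivAt E'
      (-(∑ i, (A t i * (L *ᵥ D t) i + D t i * (L *ᵥ A t) i))
        - ∑ i, kp i * (2 * D t i * A t i)) t := by
    intro t
    have h1 : HasDerivAt (fun s => ∑ i, D s i * (L *ᵥ D s) i)
        (∑ i, (A t i * (L *ᵥ D t) i + D t i * (L *ᵥ A t) i)) t :=
      HasDerivAt.fun_sum fun i _ => (hDi t i).mul (hLDi t i)
    have h2 : HasDerivAt (fun s => ∑ i, kp i * D s i ^ 2)
        (∑ i, kp i * (2 * D t i * A t i)) t := by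
      refine HasDerivAt.fun_sum fun i _ => ?_
      have := ((hDi t i).pow 2).const_mul (kp i)
      simpa [mul_assoc] using this
    have := (h1.neg).sub h2
    rw [hE'f]
    exact this
  obtain ⟨KE, hKE⟩ : ∃ KE : ℝ, ∀ s t : ℝ, 0 ≤ s → 0 ≤ t → |E' s - E' t| ≤ KE * |s - t| := by
    refine ⟨(∑ _i : Fin n, (MA * ((∑ j, |L _i j|) * BD) + BD * ((∑ j, |L _i j|) * MA)))
      + ∑ i, kp i * (2 * BD * MA), fun s t hs ht => ?_⟩
    refine lip_of_deriv (f' := fun u => -(∑ i, (A u i * (L *ᵥ D u) i + D u i * (L *ᵥ A u) i))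
      - ∑ i, kp i * (2 * D u i * A u i)) hE'd ?_ hs ht
    intro u hu
    have hb1 : |∑ i, (A u i * (L *ᵥ D u) i + D u i * (L *ᵥ A u) i)|
        ≤ ∑ i : Fin n, (MA * ((∑ j, |L i j|) * BD) + BD * ((∑ j, |L i j|) * MA)) := by
      refine (Finset.abs_sum_le_sum_abs _ _).trans (Finset.sum_le_sum fun i _ => ?_)
      have h1 : |A u i * (L *ᵥ D u) i| ≤ MA * ((∑ j, |L i j|) * BD) := by
        rw [abs_mul]
        exact mul_le_mul (hMA u hu i) (hLbnd (D u) BD (fun j => hBD u hu j) i)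
          (abs_nonneg _) hMA0
      have h2 : |D u i * (L *ᵥ A u) i| ≤ BD * ((∑ j, |L i j|) * MA) := by
        rw [abs_mul]
        exact mul_le_mul (hBD u hu i) (hLbnd (A u) MA (fun j => hMA u hu j) i)
          (abs_nonneg _) hBD0
      exact (abs_add_le _ _).trans (add_le_add h1 h2)
    have hb2 : |∑ i, kp i * (2 * D u i * A u i)| ≤ ∑ i, kp i * (2 * BD * MA) := by
      refine (Finset.abs_sum_le_sum_abs _ _).trans (Finset.sum_le_sum fun i _ => ?_)
      have heq : |kp i * (2 * D u i * A u i)| = kp i * (2 * (|D u i| * |A u i|)) := by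
        rw [abs_mul, abs_of_pos (hkp i), abs_mul, abs_mul, abs_two]
        ring
      rw [heq]
      have hDA : |D u i| * |A u i| ≤ BD * MA :=
        mul_le_mul (hBD u hu i) (hMA u hu i) (abs_nonneg _) hBD0
      nlinarith [hkp i]
    have htri : |(-(∑ i, (A u i * (L *ᵥ D u) i + D u i * (L *ᵥ A u) i))
        - ∑ i, kp i * (2 * D u i * A u i))|
        ≤ |∑ i, (A u i * (L *ᵥ D u) i + D u i * (L *ᵥ A u) i)|
          + |∑ i, kp i * (2 * D u i * A u i)| := by
      refine (abs_sub _ _).trans ?_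
      rw [abs_neg]
    linarith
  -- first Barbalat application: E' → 0, hence D → 0
  have hE'0 : Tendsto E' atTop (nhds 0) := barbalat E E' hEd KE _ hKE hElim
  have hsum0 : Tendsto (fun t => ∑ i, kp i * D t i ^ 2) atTop (nhds 0) := by
    refine squeeze_zero (fun t => hkpD t) (fun t => hE'bound t) ?_
    simpa using hE'0.neg
  have hD0 : ∀ i, Tendsto (fun t => D t i) atTop (nhds 0) := by
    intro i
    have hsq : Tendsto (fun t => D t i ^ 2) atTop (nhds 0) := by
      apply squeeze_zero (g := fun t => (∑ j, kp j * D t j ^ 2) / kp i) (fun t => sq_nonneg _)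
      · intro t
        rw [le_div_iff₀ (hkp i)]
        have h5 := Finset.single_le_sum (f := fun j => kp j * D t j ^ 2)
          (fun j _ => mul_nonneg (hkp j).le (sq_nonneg _)) (Finset.mem_univ i)
        calc D t i ^ 2 * kp i = kp i * D t i ^ 2 := mul_comm _ _
          _ ≤ _ := h5
      · simpa using hsum0.div_const (kp i)
    have habs : Tendsto (fun t => |D t i|) atTop (nhds 0) := by
      have h1 : Tendsto (fun t => Real.sqrt (D t i ^ 2)) atTop (nhds (Real.sqrt 0)) :=
        (Real.continuous_sqrt.tendsto 0).comp hsq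
      rw [Real.sqrt_zero] at h1
      refine h1.congr fun t => ?_
      rw [Real.sqrt_sq_eq_abs]
    exact tendsto_of_tendsto_of_tendsto_of_le_of_le (by simpa using habs.neg) habs
      (fun t => neg_abs_le _) (fun t => le_abs_self _)
  -- second Barbalat application (coordinatewise): A → 0
  have hA0 : ∀ i, Tendsto (fun t => A t i) atTop (nhds 0) := by
    intro i
    have hAlip : ∀ s t : ℝ, 0 ≤ s → 0 ≤ t → |A s i - A t i|
        ≤ (((∑ j, |L i j|) * MA + kp i * MA + kI i * (2 * BD)) / c i) * |s - t| := by
      intro s t hs ht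
      have hVlip : ∀ j, |V s j - V t j| ≤ BD * |s - t| := fun j =>
        lip_of_deriv (f' := fun u => D u j) (fun u => hVi u j) (fun u hu => hBD u hu j) hs ht
      have hFlipi : |F s i - F t i| ≤ 2 * BD * |s - t| := by
        rw [hF, hF]
        have h1 : |max (V s i - b) 0 - max (V t i - b) 0| ≤ |V s i - V t i| := by
          have := abs_max_sub_max_le_abs (V s i - b) (V t i - b) 0
          simpa using this
        have h2 : |max (a - V s i) 0 - max (a - V t i) 0| ≤ |V s i - V t i| := by
          have := abs_max_sub_max_le_abs (a - V s i) (a - V t i) 0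
          have heq : a - V s i - (a - V t i) = -(V s i - V t i) := by ring
          rw [heq, abs_neg] at this
          exact this
      
        have h3 : max (V s i - b) 0 - max (a - V s i) 0 - (max (V t i - b) 0 - max (a - V t i) 0)
            = (max (V s i - b) 0 - max (V t i - b) 0) - (max (a - V s i) 0 - max (a - V t i) 0) := by
          ring
        rw [h3]
        have h4 := (abs_sub (max (V s i - b) 0 - max (V t i - b) 0)
          (max (a - V s i) 0 - max (a - V t i) 0))
        have h5 := hVlip i
        linarith
      have hkey : A s i - A t i = -(((L *ᵥ D s) i - (L *ᵥ D t) i)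
          + kp i * (D s i - D t i) + kI i * (F s i - F t i)) / c i := by
        rw [hA s i, hA t i]
        ring
      rw [hkey, abs_div, abs_of_pos (hc i), abs_neg, div_mul_eq_mul_div]
      refine (div_le_div_iff_of_pos_right (hc i)).mpr ?_
      have hX : |(L *ᵥ D s) i - (L *ᵥ D t) i| ≤ (∑ j, |L i j|) * (MA * |s - t|) := by
        have heq : (L *ᵥ D s) i - (L *ᵥ D t) i = ∑ j, L i j * (D s j - D t j) := by
          simp [Matrix.mulVec, dotProduct, ← Finset.sum_sub_distrib, mul_sub]
        rw [heq]
        calc |∑ j, L i j * (D s j - D t j)| ≤ ∑ j, |L i j * (D s j - D t j)| :=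
              Finset.abs_sum_le_sum_abs _ _
          _ ≤ ∑ j, |L i j| * (MA * |s - t|) := Finset.sum_le_sum fun j _ => by
              rw [abs_mul]
              exact mul_le_mul_of_nonneg_left (hDlip j s t hs ht) (abs_nonneg _)
          _ = (∑ j, |L i j|) * (MA * |s - t|) := by rw [Finset.sum_mul]
      have hY : |kp i * (D s i - D t i)| ≤ kp i * (MA * |s - t|) := by
        rw [abs_mul, abs_of_pos (hkp i)]
        exact mul_le_mul_of_nonneg_left (hDlip i s t hs ht) (hkp i).le
      have hZ : |kI i * (F s i - F t i)| ≤ kI i * (2 * BD * |s - t|) := by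
        rw [abs_mul, abs_of_pos (hkI i)]
        exact mul_le_mul_of_nonneg_left hFlipi (hkI i).le
      have htri := abs_add_three ((L *ᵥ D s) i - (L *ᵥ D t) i)
        (kp i * (D s i - D t i)) (kI i * (F s i - F t i))
      have : ((∑ j, |L i j|) * MA + kp i * MA + kI i * (2 * BD)) * |s - t|
          = (∑ j, |L i j|) * (MA * |s - t|) + kp i * (MA * |s - t|)
            + kI i * (2 * BD * |s - t|) := by ring
      rw [this]
      linarith
    exact barbalat (fun t => D t i) (fun t => A t i) (fun t => hDi t i) _ 0 hAlip (hD0 i)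
  have hLD0 : ∀ i, Tendsto (fun t => (L *ᵥ D t) i) atTop (nhds 0) := by
    intro i
    have h1 : Tendsto (fun t => ∑ j, L i j * D t j) atTop (nhds (∑ j : Fin n, L i j * 0)) :=
      tendsto_finset_sum _ fun j _ => (hD0 j).const_mul (L i j)
    simpa [Matrix.mulVec, dotProduct] using h1
  have hF0 : ∀ i, Tendsto (fun t => F t i) atTop (nhds 0) := by
    intro i
    have hfe : ∀ t, F t i = (-(c i * A t i) - (L *ᵥ D t) i - kp i * D t i) / kI i := by
      intro t
      rw [hcA]
      rw [show -(-((L *ᵥ D t) i + kp i * D t i + kI i * F t i)) - (L *ᵥ D t) i - kp i * D t i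
        = kI i * F t i from by ring]
      rw [mul_div_cancel_left₀ _ (hkI i).ne']
    have h1 : Tendsto (fun t => (-(c i * A t i) - (L *ᵥ D t) i - kp i * D t i) / kI i)
        atTop (nhds 0) := by
      have := ((((hA0 i).const_mul (c i)).neg.sub (hLD0 i)).sub
        ((hD0 i).const_mul (kp i))).div_const (kI i)
      simpa using this
    exact h1.congr fun t => (hfe t).symm
  -- conclusion
  have hmem : ∀ t, (fun i => max a (min (V t i) b)) ∈
      {x : Fin n → ℝ | ∀ i, a ≤ x i ∧ x i ≤ b} :=
    fun t i => ⟨le_max_left _ _, max_le (ha.trans hb) (min_le_right _ _)⟩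
  have hbound : ∀ t, Metric.infDist (V t) {x : Fin n → ℝ | ∀ i, a ≤ x i ∧ x i ≤ b}
      ≤ ∑ i, |F t i| := by
    intro t
    refine le_trans (Metric.infDist_le_dist_of_mem (hmem t)) ?_
    rw [dist_pi_le_iff (Finset.sum_nonneg fun i _ => abs_nonneg _)]
    intro i
    rw [Real.dist_eq]
    have heq : V t i - max a (min (V t i) b) = F t i := by
      rw [hF]; exact clamp_eq _ (ha.trans hb)
    rw [heq]
    exact Finset.single_le_sum (f := fun j => |F t j|)
      (fun j _ => abs_nonneg _) (Finset.mem_univ i)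
  have hsumF : Tendsto (fun t => ∑ i, |F t i|) atTop (nhds 0) := by
    have h1 : Tendsto (fun t => ∑ i : Fin n, |F t i|) atTop (nhds (∑ _i : Fin n, |(0:ℝ)|)) :=
      tendsto_finset_sum _ fun i _ => (hF0 i).abs
    simpa using h1
  exact squeeze_zero (fun t => Metric.infDist_nonneg) hbound hsumF
end

section
/- If A is a real symmetric n×n matrix depending on a parameter γ > 0 as A(γ) = (1/γ)L + K with L symmetric PSD of rank n-1 (kernel spanned by 1_n) and K positive definite diagonal, then as γ → 0+, the smallest eigenvalue of A(γ) converges to (1_n^T K 1_n)/n = (Σ_i K_i)/n, and all other eigenvalues diverge to +∞. -/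
open Matrix Finset Filter

lemma inner_eq_dot {n : ℕ} (x y : EuclideanSpace ℝ (Fin n)) :
    (inner ℝ x y : ℝ) = (⇑x : Fin n → ℝ) ⬝ᵥ ⇑y := by
  rw [PiLp.inner_apply]; simp [dotProduct, mul_comm]

lemma realHerm_transpose {n : ℕ} {A : Matrix (Fin n) (Fin n) ℝ} (hA : A.IsHermitian) :
    Aᵀ = A := by
  have := hA; rwa [Matrix.IsHermitian, conjTranspose_eq_transpose_of_trivial] at this

lemma eb_dot {n : ℕ} (A : Matrix (Fin n) (Fin n) ℝ) (hA : A.IsHermitian) (i j : Fin n) :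
    (⇑(hA.eigenvectorBasis i) : Fin n → ℝ) ⬝ᵥ ⇑(hA.eigenvectorBasis j)
      = if i = j then 1 else 0 := by
  have h := orthonormal_iff_ite.mp (hA.eigenvectorBasis.orthonormal) i j
  rw [PiLp.inner_apply] at h
  simpa [dotProduct, mul_comm] using h

lemma eb_dot_mulVec {n : ℕ} (A : Matrix (Fin n) (Fin n) ℝ) (hA : A.IsHermitian)
    (i : Fin n) (x : Fin n → ℝ) :
    (⇑(hA.eigenvectorBasis i) : Fin n → ℝ) ⬝ᵥ (A *ᵥ x)
      = hA.eigenvalues i * ((⇑(hA.eigenvectorBasis i) : Fin n → ℝ) ⬝ᵥ x) := by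
  rw [dotProduct_mulVec, ← Matrix.mulVec_transpose, realHerm_transpose hA,
    hA.mulVec_eigenvectorBasis, smul_dotProduct]
  rfl

lemma expansion {n : ℕ} (A : Matrix (Fin n) (Fin n) ℝ) (hA : A.IsHermitian) (x : Fin n → ℝ) :
    x ⬝ᵥ (A *ᵥ x) = ∑ i, hA.eigenvalues i * ((⇑(hA.eigenvectorBasis i) : Fin n → ℝ) ⬝ᵥ x) ^ 2
    ∧ x ⬝ᵥ x = ∑ i, ((⇑(hA.eigenvectorBasis i) : Fin n → ℝ) ⬝ᵥ x) ^ 2 := by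
  have e1 := hA.eigenvectorBasis.sum_inner_mul_inner
    ((WithLp.equiv 2 _).symm x) ((WithLp.equiv 2 _).symm (A *ᵥ x))
  have e2 := hA.eigenvectorBasis.sum_inner_mul_inner
    ((WithLp.equiv 2 _).symm x) ((WithLp.equiv 2 _).symm x)
  simp only [inner_eq_dot, Equiv.apply_symm_apply, WithLp.equiv_symm_apply, WithLp.ofLp_toLp] at e1 e2
  constructor
  · rw [← e1]
    refine Finset.sum_congr rfl fun i _ => ?_
    rw [dotProduct_comm x, eb_dot_mulVec A hA i x]; ring
  · rw [← e2]
    refine Finset.sum_congr rfl fun i _ => ?_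
    rw [dotProduct_comm x]; ring

lemma min_range {n : ℕ} (hn : 0 < n) (f : Fin n → ℝ) :
    ∃ i₀ : Fin n, sInf (Set.range f) = f i₀ ∧ ∀ i, f i₀ ≤ f i := by
  have hne : (Finset.univ : Finset (Fin n)).Nonempty := ⟨⟨0, hn⟩, Finset.mem_univ _⟩
  obtain ⟨i₀, -, hmin⟩ := Finset.exists_min_image Finset.univ f hne
  refine ⟨i₀, le_antisymm (csInf_le (Set.finite_range f).bddBelow ⟨i₀, rfl⟩) ?_,
    fun i => hmin i (Finset.mem_univ _)⟩
  exact le_csInf ⟨f i₀, ⟨i₀, rfl⟩⟩ (by rintro b ⟨i, rfl⟩; exact hmin i (Finset.mem_univ _))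

lemma quad_form {n : ℕ} (L : Matrix (Fin n) (Fin n) ℝ) (k : Fin n → ℝ) (γ : ℝ) (x : Fin n → ℝ) :
    x ⬝ᵥ (((1 / γ) • L + Matrix.diagonal k) *ᵥ x)
      = (1 / γ) * (x ⬝ᵥ (L *ᵥ x)) + ∑ i, k i * x i ^ 2 := by
  rw [add_mulVec, dotProduct_add, smul_mulVec, dotProduct_smul, smul_eq_mul]
  congr 1
  simp [dotProduct, mulVec_diagonal]
  exact Finset.sum_congr rfl fun i _ => by ring


lemma exists_gap {n : ℕ} (L : Matrix (Fin n) (Fin n) ℝ) (hLpsd : L.PosSemidef)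
    (hker : ∀ v : Fin n → ℝ, L *ᵥ v = 0 ↔ ∃ c : ℝ, v = fun _ => c) :
    ∃ δ : ℝ, 0 < δ ∧ ∀ v : Fin n → ℝ, (∑ i, v i) = 0 → δ * (∑ i, v i ^ 2) ≤ v ⬝ᵥ L *ᵥ v := by
  have hpsd0 : ∀ v : Fin n → ℝ, 0 ≤ v ⬝ᵥ L *ᵥ v := fun v => by
    simpa using hLpsd.dotProduct_mulVec_nonneg v
  have hq : Continuous fun v : Fin n → ℝ => v ⬝ᵥ L *ᵥ v := by
    simp only [dotProduct, mulVec]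
    exact continuous_finset_sum _ fun i _ => (continuous_apply i).mul
      (continuous_finset_sum _ fun j _ => continuous_const.mul (continuous_apply j))
  have hf : Continuous fun v : Fin n → ℝ => ∑ i, v i :=
    continuous_finset_sum _ fun i _ => continuous_apply i
  have hg : Continuous fun v : Fin n → ℝ => ∑ i, v i ^ 2 :=
    continuous_finset_sum _ fun i _ => (continuous_apply i).pow 2
  set S : Set (Fin n → ℝ) := {v | (∑ i, v i) = 0 ∧ ∑ i, v i ^ 2 = 1} with hS_def
  -- scaling: any v with ∑ v = 0 and ∑ v² ≠ 0 scales into S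
  have hscale : ∀ v : Fin n → ℝ, (∑ i, v i) = 0 → (∑ i, v i ^ 2) ≠ 0 →
      ((Real.sqrt (∑ i, v i ^ 2))⁻¹ • v) ∈ S ∧
      ((Real.sqrt (∑ i, v i ^ 2))⁻¹ • v) ⬝ᵥ L *ᵥ ((Real.sqrt (∑ i, v i ^ 2))⁻¹ • v)
        = (∑ i, v i ^ 2)⁻¹ * (v ⬝ᵥ L *ᵥ v) := by
    intro v hv0 hvs
    have hs_pos : 0 < ∑ i, v i ^ 2 :=
      lt_of_le_of_ne (Finset.sum_nonneg fun i _ => sq_nonneg _) (Ne.symm hvs)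
    have hsqrt : Real.sqrt (∑ i, v i ^ 2) ^ 2 = ∑ i, v i ^ 2 := Real.sq_sqrt hs_pos.le
    have hsqrt_pos : 0 < Real.sqrt (∑ i, v i ^ 2) := Real.sqrt_pos.mpr hs_pos
    set t := (Real.sqrt (∑ i, v i ^ 2))⁻¹ with ht
    have ht2 : t ^ 2 = (∑ i, v i ^ 2)⁻¹ := by
      rw [ht, inv_pow, hsqrt]
    refine ⟨⟨?_, ?_⟩, ?_⟩
    · simp only [Pi.smul_apply, smul_eq_mul, ← Finset.mul_sum, hv0, mul_zero]
    · simp only [Pi.smul_apply, smul_eq_mul, mul_pow, ← Finset.mul_sum, ht2]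
      exact inv_mul_cancel₀ hvs
    · rw [Matrix.mulVec_smul, dotProduct_smul, smul_dotProduct]
      simp only [smul_eq_mul, ← mul_assoc, ← ht2]; ring
  by_cases hS : S.Nonempty
  · have hSclosed : IsClosed S :=
      (isClosed_eq hf continuous_const).inter (isClosed_eq hg continuous_const)
    have hSsub : S ⊆ Metric.closedBall 0 1 := by
      rintro v ⟨-, hv2⟩
      rw [Metric.mem_closedBall, dist_pi_le_iff zero_le_one]
      intro i
      have h1 : v i ^ 2 ≤ 1 := hv2 ▸ Finset.single_le_sum
        (fun j _ => sq_nonneg (v j)) (Finset.mem_univ i)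
      simpa [Real.dist_eq] using (sq_le_one_iff_abs_le_one (v i)).mp h1
    have hScompact : IsCompact S :=
      (isCompact_closedBall (0 : Fin n → ℝ) 1).of_isClosed_subset hSclosed hSsub
    obtain ⟨v₀, hv₀S, hmin⟩ := hScompact.exists_isMinOn hS hq.continuousOn
    have hδpos : 0 < v₀ ⬝ᵥ L *ᵥ v₀ := by
      rcases lt_or_eq_of_le (hpsd0 v₀) with h | h
      · exact h
      · exfalso
        have hker0 : L *ᵥ v₀ = 0 := by
          have := (hLpsd.dotProduct_mulVec_zero_iff v₀)
          rw [show star v₀ = v₀ from star_trivial v₀] at this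
          exact this.mp h.symm
        obtain ⟨c, hc⟩ := (hker v₀).mp hker0
        obtain ⟨hsum0, hsum1⟩ := hv₀S
        rw [hc] at hsum0 hsum1
        simp only [Finset.sum_const, Finset.card_univ, Fintype.card_fin, nsmul_eq_mul] at hsum0 hsum1
        rcases eq_or_ne c 0 with rfl | hc0
        · norm_num at hsum1
        · have : (n : ℝ) ≠ 0 := by
            intro hn0; rw [hn0] at hsum1; norm_num at hsum1
          rcases mul_eq_zero.mp hsum0 with h | h
          · exact absurd h this
          · exact hc0 h
    refine ⟨v₀ ⬝ᵥ L *ᵥ v₀, hδpos, fun v hv0 => ?_⟩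
    by_cases hvs : (∑ i, v i ^ 2) = 0
    · rw [hvs, mul_zero]; exact hpsd0 v
    · obtain ⟨hmem, heq⟩ := hscale v hv0 hvs
      have this : v₀ ⬝ᵥ L *ᵥ v₀ ≤ (∑ i, v i ^ 2)⁻¹ * (v ⬝ᵥ L *ᵥ v) := by
        have h := hmin hmem
        simp only [Set.mem_setOf_eq, heq] at h
        exact h
      have hs_pos : 0 < ∑ i, v i ^ 2 :=
        lt_of_le_of_ne (Finset.sum_nonneg fun i _ => sq_nonneg _) (Ne.symm hvs)
      calc (v₀ ⬝ᵥ L *ᵥ v₀) * (∑ i, v i ^ 2)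
          ≤ ((∑ i, v i ^ 2)⁻¹ * (v ⬝ᵥ L *ᵥ v)) * (∑ i, v i ^ 2) := by
            exact mul_le_mul_of_nonneg_right this hs_pos.le
        _ = v ⬝ᵥ L *ᵥ v := by field_simp
  · refine ⟨1, one_pos, fun v hv0 => ?_⟩
    by_cases hvs : (∑ i, v i ^ 2) = 0
    · rw [hvs, mul_zero]; exact hpsd0 v
    · exact absurd ⟨_, (hscale v hv0 hvs).1⟩ hS

set_option maxHeartbeats 1000000 in
lemma per_gamma {n : ℕ} (hn : 0 < n) (L : Matrix (Fin n) (Fin n) ℝ)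
    (hLpsd : L.PosSemidef)
    (hL1 : L *ᵥ (fun _ => (1:ℝ)) = 0)
    (k : Fin n → ℝ) (hk : ∀ i, 0 < k i)
    (δ : ℝ) (hδ : 0 < δ)
    (hgap : ∀ v : Fin n → ℝ, (∑ i, v i) = 0 → δ * (∑ i, v i ^ 2) ≤ v ⬝ᵥ L *ᵥ v)
    (kmax : ℝ) (hkmax : ∀ i, k i ≤ kmax)
    (γ : ℝ) (hγ : 0 < γ) :
    sInf (spectrum ℝ ((1 / γ) • L + Matrix.diagonal k)) ≤ (∑ i, k i) / n ∧
    (∑ i, k i) / n - ((∑ i, k i) / n)^2/δ * γ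
        - 2 * kmax * Real.sqrt (γ * ((∑ i, k i) / n) / δ)
      ≤ sInf (spectrum ℝ ((1 / γ) • L + Matrix.diagonal k)) ∧
    (γ * ((∑ i, k i) / n) / δ ≤ 1/4 →
      ∀ μ ∈ spectrum ℝ ((1 / γ) • L + Matrix.diagonal k),
        μ ≠ sInf (spectrum ℝ ((1 / γ) • L + Matrix.diagonal k)) → δ / (2 * γ) ≤ μ) := by
  have hn' : (0:ℝ) < n := Nat.cast_pos.mpr hn
  set T : ℝ := (∑ i, k i) / n with hT_def
  have hT_pos : 0 < T := div_pos (Finset.sum_pos (fun i _ => hk i) ⟨⟨0, hn⟩, mem_univ _⟩) hn'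
  have hkmax0 : 0 ≤ kmax := le_trans (hk ⟨0, hn⟩).le (hkmax _)
  set A : Matrix (Fin n) (Fin n) ℝ := (1 / γ) • L + Matrix.diagonal k with hA_def
  have hAH : A.IsHermitian := by
    refine Matrix.IsHermitian.add ?_ (Matrix.isHermitian_diagonal _)
    unfold Matrix.IsHermitian
    rw [conjTranspose_smul, hLpsd.1, star_trivial]
  have hLT : Lᵀ = L := realHerm_transpose hLpsd.1
  have hLconst : ∀ c : ℝ, L *ᵥ (fun _ => c) = 0 := by
    intro c
    have : (fun _ : Fin n => c) = c • (fun _ : Fin n => (1:ℝ)) := by funext i; simp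
    rw [this, Matrix.mulVec_smul, hL1, smul_zero]
  have honeL : ∀ x : Fin n → ℝ, (fun _ : Fin n => (1:ℝ)) ⬝ᵥ (L *ᵥ x) = 0 := by
    intro x
    rw [dotProduct_mulVec, ← Matrix.mulVec_transpose, hLT, hL1, zero_dotProduct]
  have hshift : ∀ (x : Fin n → ℝ) (c : ℝ),
      ((fun i => x i - c) ⬝ᵥ (L *ᵥ fun i => x i - c)) = x ⬝ᵥ (L *ᵥ x) := by
    intro x c
    have hx : (fun i => x i - c) = x - (fun _ => c) := by funext i; simp
    rw [hx, Matrix.mulVec_sub, hLconst c, sub_zero, sub_dotProduct]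
    have : (fun _ : Fin n => c) ⬝ᵥ (L *ᵥ x) = c * ((fun _ : Fin n => (1:ℝ)) ⬝ᵥ (L *ᵥ x)) := by
      simp [dotProduct, Finset.mul_sum]
    rw [this, honeL, mul_zero, sub_zero]
  have hpsdL : ∀ v : Fin n → ℝ, 0 ≤ v ⬝ᵥ L *ᵥ v := fun v => by simpa using hLpsd.dotProduct_mulVec_nonneg v
  have hsum_shift : ∀ (x : Fin n → ℝ) (c : ℝ), (∑ i, (x i - c)) = (∑ i, x i) - n * c := by
    intro x c
    rw [Finset.sum_sub_distrib]
    simp [Finset.sum_const, Finset.card_univ, mul_comm]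
  have hsq_shift : ∀ (x : Fin n → ℝ) (c : ℝ),
      (∑ i, (x i - c) ^ 2) = (∑ i, x i ^ 2) - 2 * c * (∑ i, x i) + n * c ^ 2 := by
    intro x c
    have hpt : ∀ i : Fin n, (x i - c) ^ 2 = x i ^ 2 - 2 * c * x i + c ^ 2 := fun i => by ring
    rw [Finset.sum_congr rfl fun i _ => hpt i, Finset.sum_add_distrib,
      Finset.sum_sub_distrib, ← Finset.mul_sum]
    simp [Finset.sum_const, Finset.card_univ, mul_comm]
  have hspec : spectrum ℝ A = Set.range hAH.eigenvalues := hAH.spectrum_real_eq_range_eigenvalues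
  obtain ⟨i₀, hm_eq, hm_min⟩ := min_range hn hAH.eigenvalues
  set m : ℝ := hAH.eigenvalues i₀ with hm_def
  have hsInf : sInf (spectrum ℝ A) = m := by rw [hspec, hm_eq]
  have hray : ∀ x : Fin n → ℝ, m * (x ⬝ᵥ x) ≤ x ⬝ᵥ (A *ᵥ x) := by
    intro x
    obtain ⟨e1, e2⟩ := expansion A hAH x
    rw [e1, e2, Finset.mul_sum]
    exact Finset.sum_le_sum fun i _ =>
      mul_le_mul_of_nonneg_right (hm_min i) (sq_nonneg _)
  have hub : m ≤ T := by
    set u : Fin n → ℝ := fun _ => 1 / Real.sqrt n with hu_def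
    have hsq : (1 / Real.sqrt n) ^ 2 = 1 / n := by
      rw [div_pow, one_pow, Real.sq_sqrt hn'.le]
    have huu : u ⬝ᵥ u = 1 := by
      have : u ⬝ᵥ u = ∑ _i : Fin n, (1 / Real.sqrt n) ^ 2 :=
        Finset.sum_congr rfl fun i _ => by rw [hu_def]; ring
      rw [this, hsq, Finset.sum_const, Finset.card_univ, Fintype.card_fin, nsmul_eq_mul]
      field_simp
    have huLu : u ⬝ᵥ (L *ᵥ u) = 0 := by rw [hu_def, hLconst (1 / Real.sqrt n), dotProduct_zero]
    have hQk : (∑ i, k i * u i ^ 2) = T := by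
      have h1 : ∀ i : Fin n, k i * u i ^ 2 = k i / n := by
        intro i
        rw [hu_def]
        show k i * (1 / Real.sqrt n) ^ 2 = k i / n
        rw [hsq]; ring
      rw [Finset.sum_congr rfl fun i _ => h1 i, ← Finset.sum_div, hT_def]
    have := hray u
    rw [huu, mul_one, hA_def, quad_form, huLu, mul_zero, zero_add, hQk] at this
    exact this
  set v₀ : Fin n → ℝ := ⇑(hAH.eigenvectorBasis i₀) with hv₀_def
  have hv₀v₀ : v₀ ⬝ᵥ v₀ = 1 := by rw [hv₀_def, eb_dot]; simp
  have hv₀sq : (∑ i, v₀ i ^ 2) = 1 := by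
    rw [← hv₀v₀]; exact Finset.sum_congr rfl fun i _ => by ring
  have hAv₀ : v₀ ⬝ᵥ (A *ᵥ v₀) = m := by
    rw [hv₀_def, eb_dot_mulVec, ← hv₀_def, hv₀v₀, mul_one, hm_def]
  have hsplit0 : (1 / γ) * (v₀ ⬝ᵥ (L *ᵥ v₀)) + (∑ i, k i * v₀ i ^ 2) = m := by
    rw [← hAv₀, hA_def, quad_form]
  have hQk0 : 0 ≤ ∑ i, k i * v₀ i ^ 2 :=
    Finset.sum_nonneg fun i _ => mul_nonneg (hk i).le (sq_nonneg _)
  have hQL0 : 0 ≤ v₀ ⬝ᵥ (L *ᵥ v₀) := hpsdL v₀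
  have hQLle : v₀ ⬝ᵥ (L *ᵥ v₀) ≤ γ * T := by
    have h1 : (1 / γ) * (v₀ ⬝ᵥ (L *ᵥ v₀)) ≤ T := by linarith [hsplit0, hQk0, hub]
    calc v₀ ⬝ᵥ (L *ᵥ v₀) = γ * ((1 / γ) * (v₀ ⬝ᵥ (L *ᵥ v₀))) := by field_simp
      _ ≤ γ * T := mul_le_mul_of_nonneg_left h1 hγ.le
  set a : ℝ := (∑ i, v₀ i) / n with ha_def
  set r : Fin n → ℝ := fun i => v₀ i - a with hr_def
  have hrsum : (∑ i, r i) = 0 := by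
    have h : (∑ i, r i) = (∑ i, v₀ i) - n * a := hsum_shift v₀ a
    rw [h, ha_def]; field_simp; ring
  have hLr : r ⬝ᵥ (L *ᵥ r) = v₀ ⬝ᵥ (L *ᵥ v₀) := hshift v₀ a
  set R2 : ℝ := ∑ i, r i ^ 2 with hR2_def
  set ε : ℝ := γ * T / δ with hε_def
  have hε_pos : 0 < ε := by positivity
  have hR2_nonneg : 0 ≤ R2 := Finset.sum_nonneg fun i _ => sq_nonneg _
  have hR2_le : R2 ≤ ε := by
    have h1 := hgap r hrsum
    rw [hLr] at h1
    have h2 : δ * R2 ≤ γ * T := le_trans h1 hQLle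
    rw [hε_def, le_div_iff₀ hδ]
    linarith [h2, mul_comm R2 δ]
  have hna : (n:ℝ) * a ^ 2 = 1 - R2 := by
    have h : R2 = (∑ i, v₀ i ^ 2) - 2 * a * (∑ i, v₀ i) + n * a ^ 2 := hsq_shift v₀ a
    have hsum_v₀ : (∑ i, v₀ i) = n * a := by rw [ha_def]; field_simp
    rw [hv₀sq, hsum_v₀] at h
    rw [h]; ring
  have ha2 : a ^ 2 ≤ 1 / n := by
    rw [le_div_iff₀ hn']; linarith [hna, hR2_nonneg]
  have hCS_kr : (∑ i, k i * r i) ^ 2 ≤ (n:ℝ) * kmax ^ 2 * R2 := by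
    have h1 := Finset.sum_mul_sq_le_sq_mul_sq Finset.univ k r
    have h2 : (∑ i, k i ^ 2) ≤ (n:ℝ) * kmax ^ 2 := by
      calc (∑ i, k i ^ 2) ≤ ∑ _i : Fin n, kmax ^ 2 :=
            Finset.sum_le_sum fun i _ => pow_le_pow_left₀ (hk i).le (hkmax i) 2
        _ = (n:ℝ) * kmax ^ 2 := by
            rw [Finset.sum_const, Finset.card_univ, Fintype.card_fin, nsmul_eq_mul]
    calc (∑ i, k i * r i) ^ 2 ≤ (∑ i, k i ^ 2) * R2 := h1
      _ ≤ (n:ℝ) * kmax ^ 2 * R2 := mul_le_mul_of_nonneg_right h2 hR2_nonneg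
  have hcross : -(kmax * Real.sqrt ε) ≤ a * (∑ i, k i * r i) := by
    have hsqrt_sq : Real.sqrt ε ^ 2 = ε := Real.sq_sqrt hε_pos.le
    have h1 : (a * (∑ i, k i * r i)) ^ 2 ≤ (kmax * Real.sqrt ε) ^ 2 := by
      have he : (a * (∑ i, k i * r i)) ^ 2 = a ^ 2 * (∑ i, k i * r i) ^ 2 := by ring
      rw [he, mul_pow, hsqrt_sq]
      calc a ^ 2 * (∑ i, k i * r i) ^ 2 ≤ (1/n) * ((n:ℝ) * kmax ^ 2 * R2) := by
            apply mul_le_mul ha2 hCS_kr (sq_nonneg _) (by positivity)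
        _ = kmax ^ 2 * R2 := by field_simp
        _ ≤ kmax ^ 2 * ε := mul_le_mul_of_nonneg_left hR2_le (sq_nonneg kmax)
    exact (abs_le_of_sq_le_sq' h1 (by positivity)).1
  have hQk_eq : (∑ i, k i * v₀ i ^ 2)
      = (∑ i, k i * r i ^ 2) + 2 * a * (∑ i, k i * r i) + a ^ 2 * (∑ i, k i) := by
    have hpt : ∀ i : Fin n, k i * v₀ i ^ 2
        = k i * r i ^ 2 + 2 * a * (k i * r i) + a ^ 2 * k i := by
      intro i
      have hri : r i = v₀ i - a := rfl
      rw [hri]; ring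
    rw [Finset.sum_congr rfl fun i _ => hpt i, Finset.sum_add_distrib,
      Finset.sum_add_distrib, ← Finset.mul_sum, ← Finset.mul_sum]
  have hkr2 : 0 ≤ ∑ i, k i * r i ^ 2 :=
    Finset.sum_nonneg fun i _ => mul_nonneg (hk i).le (sq_nonneg _)
  have haS : a ^ 2 * (∑ i, k i) = (1 - R2) * T := by
    have h : (∑ i, k i) = T * n := by rw [hT_def]; field_simp
    rw [h, ← hna]; ring
  have hlb : T - T^2/δ * γ - 2 * kmax * Real.sqrt ε ≤ m := by
    have hmQk : (∑ i, k i * v₀ i ^ 2) ≤ m := by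
      have h0 : 0 ≤ (1/γ) * (v₀ ⬝ᵥ (L *ᵥ v₀)) := by positivity
      linarith [hsplit0]
    have h2 : (1 - R2) * T - 2 * kmax * Real.sqrt ε ≤ ∑ i, k i * v₀ i ^ 2 := by
      rw [hQk_eq, haS]
      linarith [hcross, hkr2]
    have h3 : T - T^2/δ * γ ≤ (1 - R2) * T := by
      have h4 : R2 * T ≤ ε * T := mul_le_mul_of_nonneg_right hR2_le hT_pos.le
      have hεT : ε * T = T^2/δ * γ := by rw [hε_def]; field_simp
      linarith [h4, hεT]
    linarith
  rw [hsInf]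
  refine ⟨hub, hlb, ?_⟩
  intro hε14 μ hμmem hμne
  rw [hspec] at hμmem
  obtain ⟨i, rfl⟩ := hμmem
  have hii₀ : i ≠ i₀ := fun h => hμne (by rw [h, ← hm_def])
  set v : Fin n → ℝ := ⇑(hAH.eigenvectorBasis i) with hv_def
  have hvv : v ⬝ᵥ v = 1 := by rw [hv_def, eb_dot]; simp
  have hvsq : (∑ j, v j ^ 2) = 1 := by
    rw [← hvv]; exact Finset.sum_congr rfl fun j _ => by ring
  have hvv₀ : v ⬝ᵥ v₀ = 0 := by rw [hv_def, hv₀_def, eb_dot, if_neg hii₀]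
  have hAv : v ⬝ᵥ (A *ᵥ v) = hAH.eigenvalues i := by
    rw [hv_def, eb_dot_mulVec, ← hv_def, hvv, mul_one]
  set β : ℝ := (∑ j, v j) / n with hβ_def
  set w : Fin n → ℝ := fun j => v j - β with hw_def
  have hwsum : (∑ j, w j) = 0 := by
    have h : (∑ j, w j) = (∑ j, v j) - n * β := hsum_shift v β
    rw [h, hβ_def]; field_simp; ring
  have hLw : w ⬝ᵥ (L *ᵥ w) = v ⬝ᵥ (L *ᵥ v) := hshift v β
  set W2 : ℝ := ∑ j, w j ^ 2 with hW2_def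
  have hnβ : (n:ℝ) * β ^ 2 = 1 - W2 := by
    have h : W2 = (∑ j, v j ^ 2) - 2 * β * (∑ j, v j) + n * β ^ 2 := hsq_shift v β
    have hsum_v : (∑ j, v j) = n * β := by rw [hβ_def]; field_simp
    rw [hvsq, hsum_v] at h
    rw [h]; ring
  have hW2_nonneg : 0 ≤ W2 := Finset.sum_nonneg fun j _ => sq_nonneg _
  have hW2_le1 : W2 ≤ 1 := by
    have h0 : 0 ≤ (n:ℝ) * β ^ 2 := by positivity
    linarith [hnβ]
  have hwr : (∑ j, w j * r j) + (n:ℝ) * β * a = 0 := by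
    have hexp : ∀ j : Fin n, v j * v₀ j = w j * r j + a * w j + β * r j + β * a := by
      intro j
      have h1 : w j = v j - β := rfl
      have h2 : r j = v₀ j - a := rfl
      have h3 : v j * v₀ j = (w j + β) * (r j + a) := by rw [h1, h2]; ring
      rw [h3]; ring
    have h0 : (∑ j, v j * v₀ j) = 0 := hvv₀
    rw [Finset.sum_congr rfl fun j _ => hexp j, Finset.sum_add_distrib,
      Finset.sum_add_distrib, Finset.sum_add_distrib,
      ← Finset.mul_sum, ← Finset.mul_sum, hwsum, hrsum, mul_zero, mul_zero,
      Finset.sum_const, Finset.card_univ, Fintype.card_fin, nsmul_eq_mul] at h0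
    linarith [h0]
  have hCS_wr : ((n:ℝ) * β * a) ^ 2 ≤ W2 * R2 := by
    have h1 := Finset.sum_mul_sq_le_sq_mul_sq Finset.univ w r
    have h2 : ((n:ℝ) * β * a) ^ 2 = (∑ j, w j * r j) ^ 2 := by
      have h3 : (∑ j, w j * r j) = -((n:ℝ) * β * a) := by linarith [hwr]
      rw [h3]; ring
    rw [h2]; exact h1
  have hε14' : R2 ≤ 1/4 := le_trans hR2_le hε14
  have hna_lb : (3:ℝ)/4 ≤ (n:ℝ) * a ^ 2 := by rw [hna]; linarith
  have hW2_ge : (1:ℝ)/2 ≤ W2 := by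
    have key : (1 - W2) * ((n:ℝ) * a ^ 2) ≤ W2 * R2 := by
      have h5 : ((n:ℝ) * β * a) ^ 2 = ((n:ℝ) * β ^ 2) * ((n:ℝ) * a ^ 2) := by ring
      rw [h5, hnβ] at hCS_wr
      exact hCS_wr
    have k1 : (1 - W2) * (3/4) ≤ (1 - W2) * ((n:ℝ) * a ^ 2) :=
      mul_le_mul_of_nonneg_left hna_lb (by linarith)
    have k2 : W2 * R2 ≤ W2 * (1/4) := mul_le_mul_of_nonneg_left hε14' hW2_nonneg
    linarith [key, k1, k2]
  have hsplit : (1 / γ) * (v ⬝ᵥ (L *ᵥ v)) + (∑ j, k j * v j ^ 2) = hAH.eigenvalues i := by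
    rw [← hAv, hA_def, quad_form]
  have hQkv : 0 ≤ ∑ j, k j * v j ^ 2 :=
    Finset.sum_nonneg fun j _ => mul_nonneg (hk j).le (sq_nonneg _)
  have hgapw : δ * W2 ≤ v ⬝ᵥ (L *ᵥ v) := by
    rw [← hLw]; exact hgap w hwsum
  have hfinal : δ / (2 * γ) ≤ (1 / γ) * (v ⬝ᵥ (L *ᵥ v)) := by
    have h2 : δ * (1/2) ≤ v ⬝ᵥ (L *ᵥ v) :=
      le_trans (mul_le_mul_of_nonneg_left hW2_ge hδ.le) hgapw
    calc δ / (2 * γ) = (1/γ) * (δ * (1/2)) := by ring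
      _ ≤ (1/γ) * (v ⬝ᵥ (L *ᵥ v)) :=
          mul_le_mul_of_nonneg_left h2 (by positivity)
  linarith [hsplit, hQkv, hfinal]

/-- For `A(γ) = (1/γ)L + K` with `L` symmetric PSD of rank `n-1` (kernel spanned by
`1ₙ`) and `K` positive definite diagonal, as `γ → 0⁺` the smallest eigenvalue of
`A(γ)` converges to `(∑ Kᵢ)/n` and all other eigenvalues diverge to `+∞`. -/
theorem stmt15 (n : ℕ) (hn : 0 < n) (L : Matrix (Fin n) (Fin n) ℝ)
    (hLpsd : L.PosSemidef)
    (hker : ∀ v : Fin n → ℝ, L *ᵥ v = 0 ↔ ∃ c : ℝ, v = fun _ => c)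
    (k : Fin n → ℝ) (hk : ∀ i, 0 < k i) :
    letI A : ℝ → Matrix (Fin n) (Fin n) ℝ := fun γ => (1 / γ) • L + Matrix.diagonal k
    Tendsto (fun γ => sInf (spectrum ℝ (A γ))) (nhdsWithin 0 (Set.Ioi 0))
        (nhds ((∑ i, k i) / (n : ℝ))) ∧
      ∀ M : ℝ, ∀ᶠ γ in nhdsWithin 0 (Set.Ioi 0),
        ∀ μ ∈ spectrum ℝ (A γ), μ ≠ sInf (spectrum ℝ (A γ)) → M < μ := by
  have hn' : (0:ℝ) < n := Nat.cast_pos.mpr hn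
  set T : ℝ := (∑ i, k i) / n with hT_def
  have hT_pos : 0 < T := div_pos (Finset.sum_pos (fun i _ => hk i) ⟨⟨0, hn⟩, mem_univ _⟩) hn'
  have hL1 : L *ᵥ (fun _ => (1:ℝ)) = 0 := (hker _).mpr ⟨1, rfl⟩
  obtain ⟨δ, hδ, hgap⟩ := exists_gap L hLpsd hker
  obtain ⟨jmax, -, hjmax⟩ := Finset.exists_max_image Finset.univ k ⟨⟨0, hn⟩, Finset.mem_univ _⟩
  set kmax : ℝ := k jmax with hkmax_def
  have hkmax : ∀ i, k i ≤ kmax := fun i => hjmax i (Finset.mem_univ _)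
  have hkmax0 : 0 ≤ kmax := (hk jmax).le
  have hPG := fun (γ : ℝ) (hγ : 0 < γ) =>
    per_gamma hn L hLpsd hL1 k hk δ hδ hgap kmax hkmax γ hγ
  constructor
  · -- squeeze
    have hlow : Tendsto (fun γ : ℝ => T - T^2/δ * γ - 2 * kmax * Real.sqrt (γ * T / δ))
        (nhdsWithin 0 (Set.Ioi 0)) (nhds T) := by
      have h1 : Tendsto (fun γ : ℝ => T - T^2/δ * γ - 2 * kmax * Real.sqrt (γ * T / δ))
          (nhds 0) (nhds (T - T^2/δ * 0 - 2 * kmax * Real.sqrt (0 * T / δ))) := by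
        apply Tendsto.sub
        · apply Tendsto.sub tendsto_const_nhds
          exact (continuous_const.mul continuous_id).tendsto 0
        · apply Tendsto.mul tendsto_const_nhds
          exact (Real.continuous_sqrt.comp
            ((continuous_id.mul continuous_const).div_const δ)).tendsto 0
      have h2 : T - T^2/δ * 0 - 2 * kmax * Real.sqrt (0 * T / δ) = T := by
        simp
      rw [h2] at h1
      exact h1.mono_left nhdsWithin_le_nhds
    have hup : Tendsto (fun _ : ℝ => T) (nhdsWithin (0:ℝ) (Set.Ioi 0)) (nhds T) :=
      tendsto_const_nhds
    refine tendsto_of_tendsto_of_tendsto_of_le_of_le' hlow hup ?_ ?_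
    · filter_upwards [self_mem_nhdsWithin] with γ hγ
      exact (hPG γ hγ).2.1
    · filter_upwards [self_mem_nhdsWithin] with γ hγ
      exact (hPG γ hγ).1
  · intro M
    set γ₀ : ℝ := min (δ / (4 * T)) (δ / (2 * (|M| + 1))) with hγ₀_def
    have hγ₀_pos : 0 < γ₀ := by
      apply lt_min
      · positivity
      · positivity
    filter_upwards [Ioo_mem_nhdsGT_of_mem (Set.left_mem_Ico.mpr hγ₀_pos)] with γ hγIoo
    obtain ⟨hγpos, hγlt⟩ := hγIoo
    intro μ hμmem hμne
    have hc1 : γ * T / δ ≤ 1 / 4 := by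
      have h1 : γ < δ / (4 * T) := lt_of_lt_of_le hγlt (min_le_left _ _)
      rw [div_le_div_iff₀ (by positivity) (by norm_num)]
      rw [lt_div_iff₀ (by positivity)] at h1
      linarith [h1]
    have hμ_ge := (hPG γ hγpos).2.2 hc1 μ hμmem hμne
    have h2 : γ < δ / (2 * (|M| + 1)) := lt_of_lt_of_le hγlt (min_le_right _ _)
    rw [lt_div_iff₀ (by positivity)] at h2
    have h3 : |M| + 1 < δ / (2 * γ) := by
      rw [lt_div_iff₀ (by positivity)]
      linarith [h2]
    have h4 : M ≤ |M| := le_abs_self M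
    linarith [hμ_ge, h3, h4]
end
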